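/- arXiv:2403.02697 — 6 statements merged into one kernel-verified Lean document; each statement's English description precedes it below -/
import Mathlib

section
/- Let p_in be a probability distribution over input matrices X̃ ∈ ℝ^{(n+1)×d} (whose rows are n training inputs, forming the matrix X, and one test input x_te) that is rotationally symmetric, meaning p_in(X̃) = p_in(X̃Uᵀ) for every orthogonal U ∈ ℝ^{d×d}. Let q(ỹ | X̃) be an observation model giving the joint conditional distribution of labels ỹ = (y, y_te) ∈ ℝ^{n+1}, let 𝓛(ŷ, y) be a loss function, and let ŷ(· | X, y) be a (possibly randomized, with internal randomness Z) rotation-invariant learning algorithm. For orthogonal U define the rotated model q_U(ỹ | X̃) = q(ỹ | X̃Uᵀ), and define the expected loss L_ŷ(q) = E_{X̃∼p_in, ỹ∼q(·|X̃), Z}[𝓛(ŷ(x_te | X, y), y_te)]. Let q̊(ỹ | X̃) = ∫ q_U(ỹ | X̃) dμ(U), where μ is the Haar probability measure on the orthogonal group O(d), and let L_B(q̊) be the infimum over all measurable prediction rules g of E_{X̃∼p_in, ỹ∼q̊(·|X̃)}[𝓛(g(x_te, X, y), y_te)] (the Bayes-optimal expected loss on the symmetrized problem). Then L_ŷ(q)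 ≥ L_B(q̊). -/
open MeasureTheory ProbabilityTheory Matrix
open scoped ENNReal

noncomputable instance matrixMeasurableSpace (m n : Type*) : MeasurableSpace (Matrix m n ℝ) :=
  (inferInstance : MeasurableSpace (m → n → ℝ))

set_option maxHeartbeats 1600000 in
set_option synthInstance.maxHeartbeats 1000000 in
/-- **The Bayes risk of the rotation-symmetrized problem lower-bounds any rotation-invariant
algorithm** (Theorem 1 of the paper).  Let `p_in` be a rotationally symmetric probability
distribution over input matrices `X̃ ∈ ℝ^{(n+1)×d}` (rows: `n` training inputs `X` and one
test input `x_te`), `q(ỹ | X̃)` an observation model over `ỹ = (y, y_te) ∈ ℝ^{n+1}`,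
`𝓛 ≥ 0` a loss function, and `pred` a (possibly randomized, internal randomness `z ∼ μZ`)
rotation-invariant learning algorithm.  For orthogonal `U` let `q_U(ỹ|X̃) = q(ỹ|X̃Uᵀ)` and
let `q̊(ỹ|X̃) = ∫ q_U(ỹ|X̃) dμH(U)` be the mixture over a Haar-distributed `U` (formalized:
`μH` is a probability measure on the orthogonal group invariant under left and right
translations).  Let `L(q')` denote the expected loss of the algorithm under observation model
`q'`, and let `L_B(q̊)` be the infimum over all measurable prediction rules `g` of the
expected loss of `g` under `q̊` (the Bayes-optimal expected loss on the symmetrized problem).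
Then `L(q) ≥ L_B(q̊)`. -/
theorem rotation_invariant_bayes_lower_bound (n d : ℕ)
    (pIn : Measure (Matrix (Fin (n + 1)) (Fin d) ℝ)) [IsProbabilityMeasure pIn]
    (hsym : ∀ U ∈ Matrix.orthogonalGroup (Fin d) ℝ,
      Measure.map (fun Xt => Xt * Uᵀ) pIn = pIn)
    (q : Matrix (Fin (n + 1)) (Fin d) ℝ → Measure (Fin (n + 1) → ℝ))
    (hqprob : ∀ Xt, IsProbabilityMeasure (q Xt)) (hqmeas : Measurable q)
    (loss : ℝ → ℝ → ℝ) (hloss : Measurable fun p : ℝ × ℝ => loss p.1 p.2)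
    (hloss_nonneg : ∀ a b, 0 ≤ loss a b)
    (μH : Measure ↥(Matrix.orthogonalGroup (Fin d) ℝ)) [IsProbabilityMeasure μH]
    (hHaarR : ∀ U : ↥(Matrix.orthogonalGroup (Fin d) ℝ),
      Measure.map (fun W => W * U) μH = μH)
    (hHaarL : ∀ U : ↥(Matrix.orthogonalGroup (Fin d) ℝ),
      Measure.map (fun W => U * W) μH = μH)
    {Ω : Type*} [MeasurableSpace Ω] (μZ : Measure Ω) [IsProbabilityMeasure μZ]
    (pred : (Fin d → ℝ) → Matrix (Fin n) (Fin d) ℝ → (Fin n → ℝ) → Ω → ℝ)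
    (hmeas : Measurable fun p :
        (Fin d → ℝ) × Matrix (Fin n) (Fin d) ℝ × (Fin n → ℝ) × Ω =>
      pred p.1 p.2.1 p.2.2.1 p.2.2.2)
    (hinv : ∀ U ∈ Matrix.orthogonalGroup (Fin d) ℝ,
      ∀ (x : Fin d → ℝ) (X : Matrix (Fin n) (Fin d) ℝ) (y : Fin n → ℝ),
        Measure.map (fun z => pred (U *ᵥ x) (X * Uᵀ) y z) μZ =
          Measure.map (fun z => pred x X y z) μZ) :
    let trainX : Matrix (Fin (n + 1)) (Fin d) ℝ → Matrix (Fin n) (Fin d) ℝ := fun Xt =>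
      Matrix.of fun (i : Fin n) (j : Fin d) => Xt i.castSucc j
    let qRing : Matrix (Fin (n + 1)) (Fin d) ℝ → Measure (Fin (n + 1) → ℝ) := fun Xt =>
      μH.bind fun U => q (Xt * ((U : Matrix (Fin d) (Fin d) ℝ))ᵀ)
    let Lalg : ℝ≥0∞ := ∫⁻ Xt, (∫⁻ yt, (∫⁻ z, ENNReal.ofReal
        (loss (pred (fun j => Xt (Fin.last n) j) (trainX Xt)
          (fun i : Fin n => yt i.castSucc) z) (yt (Fin.last n))) ∂μZ) ∂(q Xt)) ∂pIn
    let LBayes : ℝ≥0∞ :=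
      ⨅ (g : (Fin d → ℝ) → Matrix (Fin n) (Fin d) ℝ → (Fin n → ℝ) → ℝ)
        (_ : Measurable fun p : (Fin d → ℝ) × Matrix (Fin n) (Fin d) ℝ × (Fin n → ℝ) =>
          g p.1 p.2.1 p.2.2),
      ∫⁻ Xt, (∫⁻ yt, ENNReal.ofReal
        (loss (g (fun j => Xt (Fin.last n) j) (trainX Xt) (fun i : Fin n => yt i.castSucc))
          (yt (Fin.last n))) ∂(qRing Xt)) ∂pIn
    LBayes ≤ Lalg := by
  classical
  intro trainX qRing Lalg LBayes
  let xte : Matrix (Fin (n + 1)) (Fin d) ℝ → (Fin d → ℝ) := fun Xt j => Xt (Fin.last n) j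
  let ytr : (Fin (n + 1) → ℝ) → (Fin n → ℝ) := fun yt i => yt i.castSucc
  let H : Matrix (Fin (n + 1)) (Fin d) ℝ → (Fin (n + 1) → ℝ) → Ω → ℝ≥0∞ := fun Xt yt z =>
    ENNReal.ofReal (loss (pred (xte Xt) (trainX Xt) (ytr yt) z) (yt (Fin.last n)))
  -- basic measurability facts
  have hxte : Measurable xte := measurable_pi_apply _
  have htrainX : Measurable trainX := by
    have h : trainX = fun Xt => fun (i : Fin n) (j : Fin d) => Xt i.castSucc j := rfl
    rw [h]
    exact measurable_pi_lambda _ fun i => measurable_pi_lambda _ fun j =>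
      (measurable_pi_apply j).comp (measurable_pi_apply i.castSucc)
  have hytr : Measurable ytr :=
    measurable_pi_lambda _ fun i => measurable_pi_apply _
  have htr : Measurable fun A : Matrix (Fin d) (Fin d) ℝ => Aᵀ :=
    measurable_pi_lambda _ fun i => measurable_pi_lambda _ fun j =>
      (measurable_pi_apply i).comp (measurable_pi_apply j)
  have hmul : Measurable fun p :
      Matrix (Fin (n + 1)) (Fin d) ℝ × Matrix (Fin d) (Fin d) ℝ => p.1 * p.2 := by
    apply measurable_pi_lambda; intro i; apply measurable_pi_lambda; intro j
    simp only [Matrix.mul_apply]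
    exact Finset.measurable_sum _ fun k _ =>
      (Measurable.mul (f := fun c : Matrix (Fin (n + 1)) (Fin d) ℝ × Matrix (Fin d) (Fin d) ℝ => c.1 i k)
        (g := fun c : Matrix (Fin (n + 1)) (Fin d) ℝ × Matrix (Fin d) (Fin d) ℝ => c.2 k j)
        ((measurable_pi_apply k).comp ((measurable_pi_apply i).comp measurable_fst))
        ((measurable_pi_apply j).comp ((measurable_pi_apply k).comp measurable_snd)))
  have hH : Measurable fun p :
      Matrix (Fin (n + 1)) (Fin d) ℝ × (Fin (n + 1) → ℝ) × Ω => H p.1 p.2.1 p.2.2 :=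
    ENNReal.measurable_ofReal.comp (hloss.comp
      ((hmeas.comp ((hxte.comp measurable_fst).prodMk
        ((htrainX.comp measurable_fst).prodMk
          ((hytr.comp (measurable_fst.comp measurable_snd)).prodMk
            (measurable_snd.comp measurable_snd))))).prodMk
        ((measurable_pi_apply _).comp (measurable_fst.comp measurable_snd))))
  let F : Matrix (Fin (n + 1)) (Fin d) ℝ → (Fin (n + 1) → ℝ) → ℝ≥0∞ :=
    fun Xt yt => ∫⁻ z, H Xt yt z ∂μZ
  have hF : Measurable fun p :
      Matrix (Fin (n + 1)) (Fin d) ℝ × (Fin (n + 1) → ℝ) => F p.1 p.2 :=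
    Measurable.lintegral_prod_right
      (f := fun p : Matrix (Fin (n + 1)) (Fin d) ℝ × (Fin (n + 1) → ℝ) => fun z => H p.1 p.2 z)
      (hH.comp ((measurable_fst.comp measurable_fst).prodMk
        ((measurable_snd.comp measurable_fst).prodMk measurable_snd)))
  -- the kernel version of q
  let κ : Kernel (Matrix (Fin (n + 1)) (Fin d) ℝ) (Fin (n + 1) → ℝ) := ⟨q, hqmeas⟩
  haveI : IsMarkovKernel κ := ⟨hqprob⟩
  have hgMO : Measurable fun p :
      Matrix (Fin (n + 1)) (Fin d) ℝ × ↥(Matrix.orthogonalGroup (Fin d) ℝ) =>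
      p.1 * ((p.2 : Matrix (Fin d) (Fin d) ℝ))ᵀ :=
    hmul.comp (measurable_fst.prodMk (htr.comp (measurable_subtype_coe.comp measurable_snd)))
  -- invariance of F under rotation of the inputs
  have hFinv : ∀ W : Matrix (Fin d) (Fin d) ℝ, W ∈ Matrix.orthogonalGroup (Fin d) ℝ →
      ∀ (Xt : Matrix (Fin (n + 1)) (Fin d) ℝ) (yt : Fin (n + 1) → ℝ),
        F (Xt * Wᵀ) yt = F Xt yt := by
    intro W hW Xt yt
    have h1 : xte (Xt * Wᵀ) = W *ᵥ (xte Xt) := by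
      funext j
      show (Xt * Wᵀ) (Fin.last n) j = _
      simp only [Matrix.mul_apply, Matrix.transpose_apply, Matrix.mulVec, dotProduct]
      exact Finset.sum_congr rfl fun k _ => mul_comm _ _
    have h2 : trainX (Xt * Wᵀ) = trainX Xt * Wᵀ := by
      ext i j
      show (Xt * Wᵀ) i.castSucc j = _
      simp only [Matrix.mul_apply, Matrix.transpose_apply]
      rfl
    have hφ : Measurable fun t : ℝ => ENNReal.ofReal (loss t (yt (Fin.last n))) :=
      ENNReal.measurable_ofReal.comp (hloss.comp (measurable_id.prodMk measurable_const))
    have hp1 : Measurable fun z => pred (W *ᵥ xte Xt) (trainX Xt * Wᵀ) (ytr yt) z :=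
      hmeas.comp (measurable_const.prodMk (measurable_const.prodMk
        (measurable_const.prodMk measurable_id)))
    have hp2 : Measurable fun z => pred (xte Xt) (trainX Xt) (ytr yt) z :=
      hmeas.comp (measurable_const.prodMk (measurable_const.prodMk
        (measurable_const.prodMk measurable_id)))
    show ∫⁻ z, ENNReal.ofReal
        (loss (pred (xte (Xt * Wᵀ)) (trainX (Xt * Wᵀ)) (ytr yt) z) (yt (Fin.last n))) ∂μZ = _
    rw [h1, h2]
    calc ∫⁻ z, ENNReal.ofReal
          (loss (pred (W *ᵥ xte Xt) (trainX Xt * Wᵀ) (ytr yt) z) (yt (Fin.last n))) ∂μZ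
        = ∫⁻ t, ENNReal.ofReal (loss t (yt (Fin.last n)))
            ∂(Measure.map (fun z => pred (W *ᵥ xte Xt) (trainX Xt * Wᵀ) (ytr yt) z) μZ) :=
          (lintegral_map hφ hp1).symm
      _ = ∫⁻ t, ENNReal.ofReal (loss t (yt (Fin.last n)))
            ∂(Measure.map (fun z => pred (xte Xt) (trainX Xt) (ytr yt) z) μZ) := by
          rw [hinv W hW]
      _ = ∫⁻ z, ENNReal.ofReal
            (loss (pred (xte Xt) (trainX Xt) (ytr yt) z) (yt (Fin.last n))) ∂μZ :=
          lintegral_map hφ hp2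
  -- orthogonal matrix facts
  have horth : ∀ u : Matrix (Fin d) (Fin d) ℝ, u ∈ Matrix.orthogonalGroup (Fin d) ℝ →
      u * uᵀ = 1 ∧ uᵀ ∈ Matrix.orthogonalGroup (Fin d) ℝ := by
    intro u hu
    rw [Matrix.mem_orthogonalGroup_iff] at hu
    refine ⟨hu, ?_⟩
    rw [Matrix.mem_orthogonalGroup_iff, Matrix.transpose_transpose,
      mul_eq_one_comm]
    exact hu
  -- Step A : for any fixed orthogonal u, the rotated risk equals Lalg
  have keyA : ∀ u : Matrix (Fin d) (Fin d) ℝ, u ∈ Matrix.orthogonalGroup (Fin d) ℝ →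
      ∫⁻ Xt, ∫⁻ yt, F Xt yt ∂(q (Xt * uᵀ)) ∂pIn = Lalg := by
    intro u hu
    obtain ⟨huuT, huT⟩ := horth u hu
    have hgu : Measurable fun Xt : Matrix (Fin (n + 1)) (Fin d) ℝ => Xt * uᵀ :=
      hmul.comp (measurable_id.prodMk measurable_const)
    have hGu : Measurable fun Xt : Matrix (Fin (n + 1)) (Fin d) ℝ =>
        ∫⁻ yt, F Xt yt ∂(q (Xt * uᵀ)) :=
      Measurable.lintegral_kernel_prod_right (κ := κ.comap _ hgu)
        (f := fun Xt yt => F Xt yt) hF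
    have hmapu : Measure.map (fun Xt : Matrix (Fin (n + 1)) (Fin d) ℝ => Xt * u) pIn = pIn := by
      have h := hsym uᵀ huT
      rwa [Matrix.transpose_transpose] at h
    have hmulu : Measurable fun Xt : Matrix (Fin (n + 1)) (Fin d) ℝ => Xt * u :=
      hmul.comp (measurable_id.prodMk measurable_const)
    calc ∫⁻ Xt, ∫⁻ yt, F Xt yt ∂(q (Xt * uᵀ)) ∂pIn
        = ∫⁻ Xt, ∫⁻ yt, F Xt yt ∂(q (Xt * uᵀ))
            ∂(Measure.map (fun Xt : Matrix (Fin (n + 1)) (Fin d) ℝ => Xt * u) pIn) := by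
          rw [hmapu]
      _ = ∫⁻ Xt, ∫⁻ yt, F (Xt * u) yt ∂(q (Xt * u * uᵀ)) ∂pIn := lintegral_map hGu hmulu
      _ = ∫⁻ Xt, ∫⁻ yt, F Xt yt ∂(q Xt) ∂pIn := by
          apply lintegral_congr
          intro Xt
          have h1 : Xt * u * uᵀ = Xt := by rw [Matrix.mul_assoc, huuT, Matrix.mul_one]
          have h2 : ∀ yt, F (Xt * u) yt = F Xt yt := by
            intro yt
            have h := hFinv uᵀ huT Xt yt
            rwa [Matrix.transpose_transpose] at h
          rw [h1]
          exact lintegral_congr fun yt => h2 yt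
      _ = Lalg := rfl
  -- ψ and its measurability
  let ψ : Matrix (Fin (n + 1)) (Fin d) ℝ → ↥(Matrix.orthogonalGroup (Fin d) ℝ) → ℝ≥0∞ :=
    fun Xt U => ∫⁻ yt, F Xt yt ∂(q (Xt * ((U : Matrix (Fin d) (Fin d) ℝ))ᵀ))
  have hψ : Measurable fun p :
      Matrix (Fin (n + 1)) (Fin d) ℝ × ↥(Matrix.orthogonalGroup (Fin d) ℝ) => ψ p.1 p.2 :=
    Measurable.lintegral_kernel_prod_right (κ := κ.comap _ hgMO)
      (f := fun p : Matrix (Fin (n + 1)) (Fin d) ℝ × ↥(Matrix.orthogonalGroup (Fin d) ℝ) =>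
        fun yt => F p.1 yt)
      (hF.comp (measurable_fst.fst.prodMk measurable_snd))
  -- S : the symmetrized risk of the algorithm
  set S : ℝ≥0∞ := ∫⁻ Xt, ∫⁻ U, ψ Xt U ∂μH ∂pIn with hS
  -- Step B : S = Lalg
  have hSLalg : S = Lalg := by
    rw [hS, lintegral_lintegral_swap hψ.aemeasurable]
    calc ∫⁻ U, ∫⁻ Xt, ψ Xt U ∂pIn ∂μH
        = ∫⁻ _U, Lalg ∂μH := lintegral_congr fun U =>
            keyA (U : Matrix (Fin d) (Fin d) ℝ) U.2
      _ = Lalg := by simp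
  -- Step C : S = ∫⁻ z, R z ∂μZ
  let R : Ω → ℝ≥0∞ := fun z =>
    ∫⁻ Xt, ∫⁻ U : ↥(Matrix.orthogonalGroup (Fin d) ℝ),
      ∫⁻ yt, H Xt yt z ∂(q (Xt * ((U : Matrix (Fin d) (Fin d) ℝ))ᵀ)) ∂μH ∂pIn
  have hSwap : S = ∫⁻ z, R z ∂μZ := by
    have c1 : ∀ (Xt : Matrix (Fin (n + 1)) (Fin d) ℝ)
        (U : ↥(Matrix.orthogonalGroup (Fin d) ℝ)), ψ Xt U
        = ∫⁻ z, ∫⁻ yt, H Xt yt z ∂(q (Xt * ((U : Matrix (Fin d) (Fin d) ℝ))ᵀ)) ∂μZ := by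
      intro Xt U
      haveI := hqprob (Xt * ((U : Matrix (Fin d) (Fin d) ℝ))ᵀ)
      exact lintegral_lintegral_swap
        ((hH.comp (measurable_const.prodMk measurable_id)).aemeasurable)
    have c2 : ∀ Xt : Matrix (Fin (n + 1)) (Fin d) ℝ, ∫⁻ U, ψ Xt U ∂μH
        = ∫⁻ z, ∫⁻ U : ↥(Matrix.orthogonalGroup (Fin d) ℝ),
            ∫⁻ yt, H Xt yt z ∂(q (Xt * ((U : Matrix (Fin d) (Fin d) ℝ))ᵀ)) ∂μH ∂μZ := by
      intro Xt
      have hgOZ : Measurable fun p : ↥(Matrix.orthogonalGroup (Fin d) ℝ) × Ω =>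
          Xt * ((p.1 : Matrix (Fin d) (Fin d) ℝ))ᵀ :=
        hmul.comp (measurable_const.prodMk (htr.comp
          (measurable_subtype_coe.comp measurable_fst)))
      have hχ : Measurable fun p : ↥(Matrix.orthogonalGroup (Fin d) ℝ) × Ω =>
          ∫⁻ yt, H Xt yt p.2 ∂(q (Xt * ((p.1 : Matrix (Fin d) (Fin d) ℝ))ᵀ)) :=
        Measurable.lintegral_kernel_prod_right (κ := κ.comap _ hgOZ)
          (f := fun p : ↥(Matrix.orthogonalGroup (Fin d) ℝ) × Ω =>
            fun yt => H Xt yt p.2)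
          (hH.comp (measurable_const.prodMk
            (measurable_snd.prodMk (measurable_snd.comp measurable_fst))))
      calc ∫⁻ U, ψ Xt U ∂μH
          = ∫⁻ U, ∫⁻ z, ∫⁻ yt, H Xt yt z
              ∂(q (Xt * ((U : Matrix (Fin d) (Fin d) ℝ))ᵀ)) ∂μZ ∂μH :=
            lintegral_congr fun U => c1 Xt U
        _ = ∫⁻ z, ∫⁻ U : ↥(Matrix.orthogonalGroup (Fin d) ℝ),
              ∫⁻ yt, H Xt yt z ∂(q (Xt * ((U : Matrix (Fin d) (Fin d) ℝ))ᵀ)) ∂μH ∂μZ :=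
            lintegral_lintegral_swap hχ.aemeasurable
    have hξ : Measurable fun p : Matrix (Fin (n + 1)) (Fin d) ℝ × Ω =>
        ∫⁻ U : ↥(Matrix.orthogonalGroup (Fin d) ℝ),
          ∫⁻ yt, H p.1 yt p.2 ∂(q (p.1 * ((U : Matrix (Fin d) (Fin d) ℝ))ᵀ)) ∂μH := by
      have hgMZO : Measurable fun r :
          (Matrix (Fin (n + 1)) (Fin d) ℝ × Ω) × ↥(Matrix.orthogonalGroup (Fin d) ℝ) =>
          r.1.1 * ((r.2 : Matrix (Fin d) (Fin d) ℝ))ᵀ :=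
        hmul.comp ((measurable_fst.comp measurable_fst).prodMk
          (htr.comp (measurable_subtype_coe.comp measurable_snd)))
      have hθ : Measurable fun r :
          (Matrix (Fin (n + 1)) (Fin d) ℝ × Ω) × ↥(Matrix.orthogonalGroup (Fin d) ℝ) =>
          ∫⁻ yt, H r.1.1 yt r.1.2 ∂(q (r.1.1 * ((r.2 : Matrix (Fin d) (Fin d) ℝ))ᵀ)) :=
        Measurable.lintegral_kernel_prod_right (κ := κ.comap _ hgMZO)
          (f := fun r :
            (Matrix (Fin (n + 1)) (Fin d) ℝ × Ω) × ↥(Matrix.orthogonalGroup (Fin d) ℝ) =>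
            fun yt => H r.1.1 yt r.1.2)
          (hH.comp ((measurable_fst.comp (measurable_fst.comp measurable_fst)).prodMk
            (measurable_snd.prodMk
              (measurable_snd.comp (measurable_fst.comp measurable_fst)))))
      exact Measurable.lintegral_prod_right
        (f := fun p : Matrix (Fin (n + 1)) (Fin d) ℝ × Ω =>
          fun U : ↥(Matrix.orthogonalGroup (Fin d) ℝ) =>
            ∫⁻ yt, H p.1 yt p.2 ∂(q (p.1 * ((U : Matrix (Fin d) (Fin d) ℝ))ᵀ))) hθ
    calc S = ∫⁻ Xt, ∫⁻ z, ∫⁻ U : ↥(Matrix.orthogonalGroup (Fin d) ℝ),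
              ∫⁻ yt, H Xt yt z ∂(q (Xt * ((U : Matrix (Fin d) (Fin d) ℝ))ᵀ)) ∂μH ∂μZ ∂pIn :=
          lintegral_congr fun Xt => c2 Xt
      _ = ∫⁻ z, R z ∂μZ := lintegral_lintegral_swap hξ.aemeasurable
  -- Step D : LBayes ≤ R z for every z
  have hDz : ∀ z : Ω, LBayes ≤ R z := by
    intro z
    have hgz : Measurable fun p : (Fin d → ℝ) × Matrix (Fin n) (Fin d) ℝ × (Fin n → ℝ) =>
        pred p.1 p.2.1 p.2.2 z :=
      hmeas.comp (measurable_fst.prodMk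
        ((measurable_fst.comp measurable_snd).prodMk
          ((measurable_snd.comp measurable_snd).prodMk measurable_const)))
    have hle : LBayes ≤ ∫⁻ Xt, ∫⁻ yt, H Xt yt z ∂(qRing Xt) ∂pIn :=
      iInf₂_le (fun x X y => pred x X y z) hgz
    refine hle.trans_eq (lintegral_congr fun Xt => ?_)
    have hbq : Measurable fun U : ↥(Matrix.orthogonalGroup (Fin d) ℝ) =>
        q (Xt * ((U : Matrix (Fin d) (Fin d) ℝ))ᵀ) :=
      hqmeas.comp (hmul.comp (measurable_const.prodMk
        (htr.comp measurable_subtype_coe)))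
    have hfz : Measurable fun yt : Fin (n + 1) → ℝ => H Xt yt z :=
      hH.comp (measurable_const.prodMk (measurable_id.prodMk measurable_const))
    exact Measure.lintegral_bind hbq.aemeasurable hfz.aemeasurable
  -- conclusion
  calc LBayes = ∫⁻ _z, LBayes ∂μZ := by simp
    _ ≤ ∫⁻ z, R z ∂μZ := lintegral_mono fun z => hDz z
    _ = S := hSwap.symm
    _ = Lalg := hSLalg
end

section
/- Consider the Bayesian model in which the target weight vector w is drawn uniformly from the unit sphere S^{d−1} ⊂ ℝ^d, the input matrix is X ∈ ℝ^{md×d} consisting of m stacked copies of H = √d·V for an orthogonal matrix V ∈ ℝ^{d×d} (so that XᵀX = md·I_d), and the labels are y = X w + ξ with ξ ∼ N(0, σ²·I_{md}). Let ŵ_RR = (XᵀX + σ²d·I_d)⁻¹ Xᵀ y be the ridge regression estimator. Then E_{w,ξ}[‖ŵ_RR − w‖²] = σ²/(m + σ²). -/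
open MeasureTheory ProbabilityTheory Matrix

open Real Filter

lemma x2exp_int {b : ℝ} (hb : 0 < b) : Integrable (fun x : ℝ => x ^ 2 * rexp (-b * x ^ 2)) := by
  have h := integrable_rpow_mul_exp_neg_mul_sq hb (s := 2) (by norm_num)
  simpa [Real.rpow_natCast] using h

lemma integral_x2exp {b : ℝ} (hb : 0 < b) :
    ∫ x : ℝ, x ^ 2 * rexp (-b * x ^ 2) = (2 * b)⁻¹ * Real.sqrt (π / b) := by
  have hv : ∀ x : ℝ, HasDerivAt (fun x : ℝ => -(2 * b)⁻¹ * rexp (-b * x ^ 2))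
      (x * rexp (-b * x ^ 2)) x := by
    intro x
    have h1 : HasDerivAt (fun x : ℝ => -b * x ^ 2) (-b * (2 * x)) x := by
      simpa using (hasDerivAt_pow 2 x).const_mul (-b)
    have h2 := (h1.exp).const_mul (-(2 * b)⁻¹)
    refine h2.congr_deriv ?_
    have hb0 : b ≠ 0 := hb.ne'
    field_simp
  have hu : ∀ x : ℝ, HasDerivAt (fun x : ℝ => x) (1 : ℝ) x := fun x => hasDerivAt_id x
  have e1 : ((fun x : ℝ => x) * fun x => x * rexp (-b * x ^ 2))
      = fun x : ℝ => x ^ 2 * rexp (-b * x ^ 2) := by funext x; simp [Pi.mul_apply]; ring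
  have e2 : ((fun _ : ℝ => (1:ℝ)) * fun x => -(2 * b)⁻¹ * rexp (-b * x ^ 2))
      = fun x : ℝ => -(2 * b)⁻¹ * rexp (-b * x ^ 2) := by funext x; simp
  have e3 : ((fun x : ℝ => x) * fun x => -(2 * b)⁻¹ * rexp (-b * x ^ 2))
      = fun x : ℝ => -(2 * b)⁻¹ * (x * rexp (-b * x ^ 2)) := by
    funext x; simp [Pi.mul_apply]; ring
  have key := integral_mul_deriv_eq_deriv_mul_of_integrable (fun x _ => hu x) (fun x _ => hv x)
    (by rw [e1]; exact x2exp_int hb)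
    (by rw [e2]; exact (integrable_exp_neg_mul_sq hb).const_mul _)
    (by rw [e3]; exact (integrable_mul_exp_neg_mul_sq hb).const_mul _)
  have e0 : (fun x : ℝ => x * (x * rexp (-b * x ^ 2)))
      = fun x : ℝ => x ^ 2 * rexp (-b * x ^ 2) := by funext x; ring
  rw [show (∫ x : ℝ, x * (x * rexp (-b * x ^ 2))) = ∫ x : ℝ, x ^ 2 * rexp (-b * x ^ 2) from by
    rw [e0]] at key
  rw [key, integral_const_mul, integral_const_mul, integral_gaussian]
  ring

-- transfer to gaussianReal
lemma gauss_integral_eq {v : NNReal} (hv : v ≠ 0) (f : ℝ → ℝ) :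
    ∫ x, f x ∂(gaussianReal 0 v) = ∫ x, gaussianPDFReal 0 v x * f x := by
  rw [gaussianReal_of_var_ne_zero 0 hv]
  have hm : Measurable fun x => (gaussianPDFReal 0 v x).toNNReal :=
    (measurable_gaussianPDFReal 0 v).real_toNNReal
  have : (gaussianPDF 0 v) = fun x => ((gaussianPDFReal 0 v x).toNNReal : ENNReal) := by
    funext x; rfl
  rw [this, integral_withDensity_eq_integral_smul hm]
  congr 1; funext x
  simp [NNReal.smul_def, Real.coe_toNNReal _ (gaussianPDFReal_nonneg 0 v x)]

lemma gauss_integrable_iff {v : NNReal} (hv : v ≠ 0) (f : ℝ → ℝ) :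
    Integrable f (gaussianReal 0 v) ↔
      Integrable (fun x => gaussianPDFReal 0 v x * f x) := by
  rw [gaussianReal_of_var_ne_zero 0 hv]
  have hm : Measurable fun x => (gaussianPDFReal 0 v x).toNNReal :=
    (measurable_gaussianPDFReal 0 v).real_toNNReal
  have : (gaussianPDF 0 v) = fun x => ((gaussianPDFReal 0 v x).toNNReal : ENNReal) := by
    funext x; rfl
  rw [this, integrable_withDensity_iff_integrable_smul hm]
  constructor <;> intro h <;> [skip; skip] <;>
    · refine h.congr (Filter.Eventually.of_forall fun x => ?_)
      simp [NNReal.smul_def, Real.coe_toNNReal _ (gaussianPDFReal_nonneg 0 v x)]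

lemma pdf_rewrite (v : NNReal) (f : ℝ → ℝ) :
    (fun x => gaussianPDFReal 0 v x * f x)
      = fun x => (Real.sqrt (2 * π * v))⁻¹ * (rexp (-(2 * (v:ℝ))⁻¹ * x ^ 2) * f x) := by
  funext x
  have h : -(x - 0) ^ 2 / (2 * (v:ℝ)) = -(2 * (v:ℝ))⁻¹ * x ^ 2 := by ring
  rw [gaussianPDFReal, h]; ring

lemma vpos {v : NNReal} (hv : v ≠ 0) : (0:ℝ) < v :=
  lt_of_le_of_ne v.coe_nonneg (by exact_mod_cast (Ne.symm hv))

lemma gauss_integrable_id (v : NNReal) : Integrable (fun x => x) (gaussianReal 0 v) := by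
  rcases eq_or_ne v 0 with rfl | hv
  · rw [gaussianReal_zero_var]
    exact (integrable_const (0:ℝ)).congr (ae_eq_dirac (fun x : ℝ => x)).symm
  have hb : (0:ℝ) < (2 * (v:ℝ))⁻¹ := by have := vpos hv; positivity
  rw [gauss_integrable_iff hv, pdf_rewrite v]
  have h := ((integrable_mul_exp_neg_mul_sq hb).const_mul (Real.sqrt (2 * π * v))⁻¹)
  exact h.congr (Eventually.of_forall fun x => by ring)

lemma gauss_integrable_sq (v : NNReal) : Integrable (fun x => x ^ 2) (gaussianReal 0 v) := by
  rcases eq_or_ne v 0 with rfl | hv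
  · rw [gaussianReal_zero_var]
    exact (integrable_const ((0:ℝ) ^ 2)).congr (ae_eq_dirac (fun x : ℝ => x ^ 2)).symm
  have hb : (0:ℝ) < (2 * (v:ℝ))⁻¹ := by have := vpos hv; positivity
  rw [gauss_integrable_iff hv, pdf_rewrite v]
  have h := ((x2exp_int hb).const_mul (Real.sqrt (2 * π * v))⁻¹)
  exact h.congr (Eventually.of_forall fun x => by ring)

lemma gauss_integral_id (v : NNReal) : ∫ x, x ∂(gaussianReal 0 v) = 0 := by
  have hmap := gaussianReal_map_const_mul (μ := 0) (v := v) (-1)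
  have hone : (NNReal.mk ((-1:ℝ)^2) (sq_nonneg _)) = 1 := by ext; norm_num
  have h1 := integral_map (μ := gaussianReal 0 v) (φ := fun x : ℝ => (-1:ℝ) * x)
    (f := fun x : ℝ => x) (by fun_prop) measurable_id.aestronglyMeasurable
  rw [hmap, hone, one_mul] at h1
  norm_num at h1
  rw [integral_neg] at h1
  linarith

lemma gauss_integral_sq (v : NNReal) : ∫ x, x ^ 2 ∂(gaussianReal 0 v) = v := by
  rcases eq_or_ne v 0 with rfl | hv
  · rw [gaussianReal_zero_var, integral_dirac]; simp
  have hvpos : (0:ℝ) < v := vpos hv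
  have hb : (0:ℝ) < (2 * (v:ℝ))⁻¹ := by positivity
  rw [gauss_integral_eq hv, pdf_rewrite v]
  rw [integral_const_mul]
  rw [show (∫ x : ℝ, rexp (-(2 * (v:ℝ))⁻¹ * x ^ 2) * x ^ 2)
      = ∫ x : ℝ, x ^ 2 * rexp (-(2 * (v:ℝ))⁻¹ * x ^ 2) from by
    congr 1; funext x; ring]
  rw [integral_x2exp hb]
  have h2 : (2 * (2 * (v:ℝ))⁻¹)⁻¹ = (v:ℝ) := by field_simp
  have h3 : π / (2 * (v:ℝ))⁻¹ = 2 * π * (v:ℝ) := by field_simp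
  rw [h2, h3]
  have hs : Real.sqrt (2 * π * (v:ℝ)) ≠ 0 := by positivity
  field_simp

lemma gpi_integrable {n : ℕ} (v : NNReal) (f : Fin n → ℝ → ℝ)
    (hf : ∀ i, Integrable (f i) (gaussianReal 0 v)) :
    Integrable (fun ξ : Fin n → ℝ => ∏ i, f i (ξ i))
      (Measure.pi fun _ => gaussianReal 0 v) := by
  letI : MeasureSpace ℝ := ⟨gaussianReal 0 v⟩
  haveI : SigmaFinite (volume : Measure ℝ) := inferInstanceAs (SigmaFinite (gaussianReal 0 v))
  exact MeasureTheory.Integrable.fintype_prod (f := f) hf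

lemma gpi_integral {n : ℕ} (v : NNReal) (f : Fin n → ℝ → ℝ) :
    ∫ ξ : Fin n → ℝ, ∏ i, f i (ξ i) ∂(Measure.pi fun _ => gaussianReal 0 v)
      = ∏ i, ∫ x, f i x ∂(gaussianReal 0 v) := by
  letI : MeasureSpace ℝ := ⟨gaussianReal 0 v⟩
  haveI : SigmaFinite (volume : Measure ℝ) := inferInstanceAs (SigmaFinite (gaussianReal 0 v))
  exact MeasureTheory.integral_fintype_prod_eq_prod f

lemma if_integrable (v : NNReal) (P Q : Prop) [Decidable P] [Decidable Q] :
    Integrable (fun x : ℝ => (if P then x else 1) * (if Q then x else 1))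
      (gaussianReal 0 v) := by
  by_cases hP : P <;> by_cases hQ : Q <;> simp [hP, hQ]
  · exact (gauss_integrable_sq v).congr (Eventually.of_forall fun x => pow_two x)
  · exact gauss_integrable_id v
  · exact gauss_integrable_id v

lemma gpi_integrable_mul {n : ℕ} (v : NNReal) (p q : Fin n) :
    Integrable (fun ξ : Fin n → ℝ => ξ p * ξ q)
      (Measure.pi fun _ => gaussianReal 0 v) := by
  have := gpi_integrable v (fun i x => (if i = p then x else 1) * (if i = q then x else 1))
    (fun i => if_integrable v _ _)
  refine this.congr (Eventually.of_forall fun ξ => ?_)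
  simp only [Finset.prod_mul_distrib, Finset.prod_ite_eq', Finset.mem_univ, if_pos]

lemma gpi_integrable_eval {n : ℕ} (v : NNReal) (p : Fin n) :
    Integrable (fun ξ : Fin n → ℝ => ξ p)
      (Measure.pi fun _ => gaussianReal 0 v) := by
  have := gpi_integrable v (fun i x => if i = p then x else 1)
    (fun i => by
      by_cases h : i = p
      · simpa [h] using gauss_integrable_id v
      · simp [h])
  refine this.congr (Eventually.of_forall fun ξ => ?_)
  simp only [Finset.prod_ite_eq', Finset.mem_univ, if_pos]

lemma gpi_integral_eval {n : ℕ} (v : NNReal) (p : Fin n) :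
    ∫ ξ : Fin n → ℝ, ξ p ∂(Measure.pi fun _ => gaussianReal 0 v) = 0 := by
  have h := gpi_integral v (fun i x => if i = p then x else 1)
  rw [show (fun ξ : Fin n → ℝ => ξ p)
      = fun ξ : Fin n → ℝ => ∏ i, (fun i x => if i = p then x else 1) i (ξ i) from
    funext fun ξ => by simp [Finset.prod_ite_eq']]
  rw [h]
  refine Finset.prod_eq_zero (Finset.mem_univ p) ?_
  simpa using gauss_integral_id v

lemma gpi_integral_mul {n : ℕ} (v : NNReal) (p q : Fin n) :
    ∫ ξ : Fin n → ℝ, ξ p * ξ q ∂(Measure.pi fun _ => gaussianReal 0 v)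
      = if p = q then (v:ℝ) else 0 := by
  have h := gpi_integral v (fun i x => (if i = p then x else 1) * (if i = q then x else 1))
  rw [show (fun ξ : Fin n → ℝ => ξ p * ξ q)
      = fun ξ : Fin n → ℝ =>
        ∏ i, (fun i x => (if i = p then x else 1) * (if i = q then x else 1)) i (ξ i) from
    funext fun ξ => by
      rw [Finset.prod_mul_distrib, Finset.prod_ite_eq', Finset.prod_ite_eq']; simp]
  rw [h]
  by_cases hpq : p = q
  · subst hpq
    rw [if_pos rfl, Finset.prod_eq_single p]
    · rw [show (∫ x : ℝ, (fun i x => (if i = p then x else 1) * (if i = p then x else 1)) p x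
            ∂(gaussianReal 0 v)) = ∫ x, x ^ 2 ∂(gaussianReal 0 v) from by
        congr 1; funext x; simp [pow_two]]
      exact gauss_integral_sq v
    · intro i _ hi; simp [hi]
    · intro h'; exact absurd (Finset.mem_univ p) h'
  · rw [if_neg hpq]
    refine Finset.prod_eq_zero (Finset.mem_univ p) ?_
    rw [show (∫ x : ℝ, (fun i x => (if i = p then x else 1) * (if i = q then x else 1)) p x
          ∂(gaussianReal 0 v)) = ∫ x, x ∂(gaussianReal 0 v) from by
      congr 1; funext x; simp [hpq]]
    exact gauss_integral_id v

lemma mod_sum {d m : ℕ} (hd : 0 < d) (f : Fin d → ℝ) :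
    ∑ p : Fin (m * d), f ⟨(p : ℕ) % d, Nat.mod_lt _ hd⟩ = m * ∑ k, f k := by
  rw [← Equiv.sum_comp (finProdFinEquiv (m := m) (n := d))
    (fun p => f ⟨(p : ℕ) % d, Nat.mod_lt _ hd⟩)]
  rw [Fintype.sum_prod_type]
  have : ∀ (x : Fin m) (y : Fin d),
      f ⟨((finProdFinEquiv (x, y) : Fin (m * d)) : ℕ) % d, Nat.mod_lt _ hd⟩ = f y := by
    intro x y
    congr 1
    ext
    simp only [finProdFinEquiv_apply_val]
    rw [Nat.add_mul_mod_self_left, Nat.mod_eq_of_lt y.isLt]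
  simp_rw [this]
  simp [Finset.sum_const, mul_comm]

example {d : ℕ} (V : Matrix (Fin d) (Fin d) ℝ) (hV : V ∈ Matrix.orthogonalGroup (Fin d) ℝ)
    (i j : Fin d) : ∑ k, V k i * V k j = (1 : Matrix (Fin d) (Fin d) ℝ) i j := by
  have h1 : star V * V = 1 := hV.1
  have := congrArg (fun M : Matrix (Fin d) (Fin d) ℝ => M i j) h1
  simpa [Matrix.mul_apply, Matrix.star_apply] using this

example {d : ℕ} (V : Matrix (Fin d) (Fin d) ℝ) (hV : V ∈ Matrix.orthogonalGroup (Fin d) ℝ)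
    (k : Fin d) : ∑ i, V k i * V k i = 1 := by
  have h1 : V * star V = 1 := hV.2
  have := congrArg (fun M : Matrix (Fin d) (Fin d) ℝ => M k k) h1
  simpa [Matrix.mul_apply, Matrix.star_apply] using this

example {d : ℕ} (c : ℝ) (hc : c ≠ 0) :
    (c • (1 : Matrix (Fin d) (Fin d) ℝ))⁻¹ = c⁻¹ • 1 := by
  refine Matrix.inv_eq_left_inv ?_
  rw [Matrix.smul_mul, Matrix.mul_smul, smul_smul, Matrix.one_mul, inv_mul_cancel₀ hc, one_smul]

/-- **Exact Bayes risk of ridge regression under the uniform-sphere prior.**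
Let the target `w` be drawn uniformly from the unit sphere `S^{d-1}` (formalized as: a
probability measure supported on the unit sphere and invariant under every orthogonal
rotation), let `X ∈ ℝ^{md×d}` consist of `m` stacked copies of `H = √d·V` for an orthogonal
`V` (so `XᵀX = md·I`), and let `y = X w + ξ` with `ξ ∼ N(0, σ² I_{md})`.  Then the ridge
regression estimator `ŵ_RR = (XᵀX + σ²d·I)⁻¹ Xᵀ y` satisfies
`E_{w,ξ}[‖ŵ_RR - w‖²] = σ²/(m + σ²)`. -/
theorem ridge_regression_exact_risk (d m : ℕ) (hd : 0 < d) (hm : 0 < m) (σ : NNReal)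
    (V : Matrix (Fin d) (Fin d) ℝ) (hV : V ∈ Matrix.orthogonalGroup (Fin d) ℝ)
    (μw : Measure (Fin d → ℝ)) [IsProbabilityMeasure μw]
    (hsphere : μw {w | ∑ i, (w i) ^ 2 = 1} = 1)
    (hrot : ∀ U ∈ Matrix.orthogonalGroup (Fin d) ℝ,
      Measure.map (fun w => U *ᵥ w) μw = μw) :
    let X : Matrix (Fin (m * d)) (Fin d) ℝ :=
      Matrix.of fun (p : Fin (m * d)) (j : Fin d) =>
        Real.sqrt d * V ⟨(p : ℕ) % d, Nat.mod_lt _ hd⟩ j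
    let μξ : Measure (Fin (m * d) → ℝ) := Measure.pi fun _ => gaussianReal 0 (σ ^ 2)
    let wRR : (Fin d → ℝ) × (Fin (m * d) → ℝ) → Fin d → ℝ := fun p =>
      ((Xᵀ * X + ((σ : ℝ) ^ 2 * d) • (1 : Matrix (Fin d) (Fin d) ℝ))⁻¹ * Xᵀ) *ᵥ
        (X *ᵥ p.1 + p.2)
    (∫ p, (∑ i, (wRR p i - p.1 i) ^ 2) ∂(μw.prod μξ)) = (σ : ℝ) ^ 2 / (m + (σ : ℝ) ^ 2) := by
  intro X μξ wRR
  haveI : IsProbabilityMeasure μξ :=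
    inferInstanceAs (IsProbabilityMeasure (Measure.pi fun _ : Fin (m * d) => gaussianReal 0 (σ ^ 2)))
  have hdR : (0:ℝ) < d := by exact_mod_cast hd
  have hmR : (0:ℝ) < m := by exact_mod_cast hm
  set a : ℝ := (σ : ℝ) ^ 2 with ha
  have ha0 : 0 ≤ a := sq_nonneg _
  set c : ℝ := (m : ℝ) * d + a * d with hcdef
  have hcpos : 0 < c := by nlinarith
  have hc : c ≠ 0 := ne_of_gt hcpos
  have hX : ∀ (p : Fin (m * d)) (j : Fin d),
      X p j = Real.sqrt d * V ⟨(p : ℕ) % d, Nat.mod_lt _ hd⟩ j := fun p j => rfl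
  have hVcol : ∀ i j, ∑ k, V k i * V k j = (1 : Matrix (Fin d) (Fin d) ℝ) i j := by
    intro i j
    have h1 : star V * V = 1 := hV.1
    have := congrArg (fun M : Matrix (Fin d) (Fin d) ℝ => M i j) h1
    simpa [Matrix.mul_apply, Matrix.star_apply] using this
  have hVrow : ∀ k, ∑ i, V k i * V k i = 1 := by
    intro k
    have h1 : V * star V = 1 := hV.2
    have := congrArg (fun M : Matrix (Fin d) (Fin d) ℝ => M k k) h1
    simpa [Matrix.mul_apply, Matrix.star_apply] using this
  have hXtX : Xᵀ * X = ((m : ℝ) * d) • (1 : Matrix (Fin d) (Fin d) ℝ) := by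
    ext i j
    rw [Matrix.mul_apply]
    simp only [Matrix.transpose_apply, Matrix.smul_apply, smul_eq_mul]
    calc ∑ p, X p i * X p j
        = ∑ p : Fin (m * d), (d : ℝ) *
            ((fun k => V k i * V k j) ⟨(p : ℕ) % d, Nat.mod_lt _ hd⟩) := by
          refine Finset.sum_congr rfl fun p _ => ?_
          rw [hX, hX, mul_mul_mul_comm, Real.mul_self_sqrt hdR.le]
      _ = (d : ℝ) * ∑ p : Fin (m * d), (fun k => V k i * V k j) ⟨(p : ℕ) % d, Nat.mod_lt _ hd⟩ := by
          rw [Finset.mul_sum]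
      _ = (d : ℝ) * ((m : ℝ) * ∑ k, V k i * V k j) := by
          congr 1; exact mod_sum hd (fun k => V k i * V k j)
      _ = (m : ℝ) * (d : ℝ) * (1 : Matrix (Fin d) (Fin d) ℝ) i j := by rw [hVcol i j]; ring
  have hXsq : ∀ q, ∑ i, X q i * X q i = (d : ℝ) := by
    intro q
    calc ∑ i, X q i * X q i
        = ∑ i, (d : ℝ) * (V ⟨(q : ℕ) % d, Nat.mod_lt _ hd⟩ i * V ⟨(q : ℕ) % d, Nat.mod_lt _ hd⟩ i) := by
          refine Finset.sum_congr rfl fun i _ => ?_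
          rw [hX, mul_mul_mul_comm, Real.mul_self_sqrt hdR.le]
      _ = (d : ℝ) * ∑ i, V ⟨(q : ℕ) % d, Nat.mod_lt _ hd⟩ i * V ⟨(q : ℕ) % d, Nat.mod_lt _ hd⟩ i := by
          rw [Finset.mul_sum]
      _ = (d : ℝ) := by rw [hVrow]; ring
  have hsum : Xᵀ * X + (a * (d:ℝ)) • (1 : Matrix (Fin d) (Fin d) ℝ) = c • 1 := by
    rw [hXtX, ← add_smul]
  have hinv : (c • (1 : Matrix (Fin d) (Fin d) ℝ))⁻¹ = c⁻¹ • 1 := by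
    refine Matrix.inv_eq_left_inv ?_
    rw [Matrix.smul_mul, Matrix.mul_smul, smul_smul, Matrix.one_mul, inv_mul_cancel₀ hc, one_smul]
  set T : Fin d → (Fin (m * d) → ℝ) → ℝ := fun i ξ => ∑ q, X q i * ξ q with hTdef
  set β : ℝ := (m : ℝ) * d * c⁻¹ - 1 with hβ
  set γ : ℝ := c⁻¹ with hγ
  have hT : ∀ (ξ : Fin (m * d) → ℝ) (i : Fin d), (Xᵀ *ᵥ ξ) i = T i ξ := by
    intro ξ i
    simp [Matrix.mulVec, dotProduct, Matrix.transpose_apply, hTdef]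
  have hpt : ∀ z : (Fin d → ℝ) × (Fin (m * d) → ℝ), ∀ i,
      wRR z i - z.1 i = β * z.1 i + γ * T i z.2 := by
    intro z i
    have h1 : wRR z = c⁻¹ • (((m : ℝ) * d) • z.1 + Xᵀ *ᵥ z.2) := by
      show ((Xᵀ * X + ((σ : ℝ) ^ 2 * d) • 1)⁻¹ * Xᵀ) *ᵥ (X *ᵥ z.1 + z.2) = _
      rw [show ((σ : ℝ) ^ 2 * (d:ℝ)) = a * d from rfl, hsum, hinv, Matrix.smul_mul,
        Matrix.one_mul, Matrix.smul_mulVec, Matrix.mulVec_add, Matrix.mulVec_mulVec,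
        hXtX, Matrix.smul_mulVec, Matrix.one_mulVec]
    rw [h1]
    simp only [Pi.smul_apply, Pi.add_apply, smul_eq_mul]
    rw [hT]
    rw [hβ, hγ]
    ring
  have hsplit : ∀ z : (Fin d → ℝ) × (Fin (m * d) → ℝ),
      ∑ i, (wRR z i - z.1 i) ^ 2
        = β ^ 2 * (∑ i, z.1 i ^ 2)
          + ((∑ i, (2 * β * γ) * (z.1 i * T i z.2)) + γ ^ 2 * ∑ i, (T i z.2) ^ 2) := by
    intro z
    simp_rw [hpt z]
    rw [Finset.mul_sum, Finset.mul_sum, ← Finset.sum_add_distrib, ← Finset.sum_add_distrib]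
    exact Finset.sum_congr rfl fun i _ => by ring
  -- sphere a.e. facts
  have hSmeas : MeasurableSet {w : Fin d → ℝ | ∑ i, (w i) ^ 2 = 1} := by
    have : Measurable fun w : Fin d → ℝ => ∑ i, (w i) ^ 2 := by
      exact Finset.measurable_sum _ fun i _ => (measurable_pi_apply i).pow_const 2
    exact this (measurableSet_singleton 1)
  have hae : ∀ᵐ w ∂μw, ∑ i, (w i) ^ 2 = 1 := by
    rw [ae_iff]
    have := (prob_compl_eq_zero_iff hSmeas).2 hsphere
    simpa [Set.compl_setOf] using this
  have haeprod : ∀ᵐ z : (Fin d → ℝ) × (Fin (m * d) → ℝ) ∂(μw.prod μξ),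
      ∑ i, (z.1 i) ^ 2 = 1 := by
    rw [ae_iff]
    have hset : {z : (Fin d → ℝ) × (Fin (m * d) → ℝ) | ¬ ∑ i, (z.1 i) ^ 2 = 1}
        = Prod.fst ⁻¹' {w | ∑ i, (w i) ^ 2 = 1}ᶜ := by
      ext z; simp
    rw [hset, ← Measure.map_apply measurable_fst hSmeas.compl, Measure.map_fst_prod]
    have h0 : μw {w | ∑ i, (w i) ^ 2 = 1}ᶜ = 0 := (prob_compl_eq_zero_iff hSmeas).2 hsphere
    simp [h0]
  have hwi : ∀ i, Integrable (fun w : Fin d → ℝ => w i) μw := by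
    intro i
    refine Integrable.mono' (integrable_const 1)
      ((measurable_pi_apply i).aestronglyMeasurable) ?_
    filter_upwards [hae] with w hw
    rw [Real.norm_eq_abs]
    have h1 : (w i) ^ 2 ≤ 1 := by
      rw [← hw]
      exact Finset.single_le_sum (fun j _ => sq_nonneg (w j)) (Finset.mem_univ i)
    exact (sq_le_one_iff_abs_le_one (w i)).1 h1
  have hTint : ∀ i, Integrable (T i) μξ := fun i =>
    integrable_finset_sum _ fun q _ => (gpi_integrable_eval (σ ^ 2) q).const_mul (X q i)
  have hTexp : ∀ (i : Fin d) (ξ : Fin (m * d) → ℝ),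
      (T i ξ) ^ 2 = ∑ q, ∑ r, (X q i * X r i) * (ξ q * ξ r) := by
    intro i ξ
    rw [sq, hTdef]
    rw [Finset.sum_mul_sum]
    exact Finset.sum_congr rfl fun q _ => Finset.sum_congr rfl fun r _ => by ring
  have hTsqint : ∀ i, Integrable (fun ξ => (T i ξ) ^ 2) μξ := by
    intro i
    have : Integrable (fun ξ : Fin (m * d) → ℝ => ∑ q, ∑ r, (X q i * X r i) * (ξ q * ξ r)) μξ :=
      integrable_finset_sum _ fun q _ => integrable_finset_sum _ fun r _ =>
        (gpi_integrable_mul (σ ^ 2) q r).const_mul _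
    exact this.congr (Eventually.of_forall fun ξ => (hTexp i ξ).symm)
  have hTzero : ∀ i, ∫ ξ, T i ξ ∂μξ = 0 := by
    intro i
    rw [hTdef]
    rw [integral_finset_sum _ fun q _ => (gpi_integrable_eval (σ ^ 2) q).const_mul (X q i)]
    simp_rw [integral_const_mul]
    simp [gpi_integral_eval (σ ^ 2)]
  have hTsqval : ∀ i, ∫ ξ, (T i ξ) ^ 2 ∂μξ = a * ∑ q, X q i * X q i := by
    intro i
    simp_rw [hTexp i]
    rw [integral_finset_sum _ fun q _ => integrable_finset_sum _ fun r _ =>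
      (gpi_integrable_mul (σ ^ 2) q r).const_mul _]
    have : ∀ q : Fin (m * d),
        ∫ ξ, ∑ r, (X q i * X r i) * (ξ q * ξ r) ∂μξ = X q i * X q i * a := by
      intro q
      rw [integral_finset_sum _ fun r _ => (gpi_integrable_mul (σ ^ 2) q r).const_mul _]
      simp_rw [integral_const_mul, gpi_integral_mul (σ ^ 2)]
      simp [mul_ite, mul_zero, Finset.sum_ite_eq, ha, NNReal.coe_pow]
    rw [Finset.sum_congr rfl fun q _ => this q]
    rw [← Finset.sum_mul, mul_comm]
  have hTsqtotal : ∑ i, ∫ ξ, (T i ξ) ^ 2 ∂μξ = a * ((m : ℝ) * d * d) := by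
    simp_rw [hTsqval]
    rw [← Finset.mul_sum, Finset.sum_comm]
    simp_rw [hXsq]
    rw [Finset.sum_const, Finset.card_univ, Fintype.card_fin]
    simp only [nsmul_eq_mul]
    push_cast
    ring
  -- integrability of the three pieces
  have he : (fun z : (Fin d → ℝ) × (Fin (m * d) → ℝ) => β ^ 2 * ∑ i, z.1 i ^ 2)
      =ᵐ[μw.prod μξ] fun _ => β ^ 2 := by
    filter_upwards [haeprod] with z hz
    rw [hz, mul_one]
  have IA : Integrable (fun z : (Fin d → ℝ) × (Fin (m * d) → ℝ) =>
      β ^ 2 * ∑ i, z.1 i ^ 2) (μw.prod μξ) := (integrable_const (β ^ 2)).congr he.symm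
  have IBk : ∀ i, Integrable (fun z : (Fin d → ℝ) × (Fin (m * d) → ℝ) =>
      (2 * β * γ) * (z.1 i * T i z.2)) (μw.prod μξ) := fun i =>
    ((hwi i).mul_prod (hTint i)).const_mul _
  have IB : Integrable (fun z : (Fin d → ℝ) × (Fin (m * d) → ℝ) =>
      ∑ i, (2 * β * γ) * (z.1 i * T i z.2)) (μw.prod μξ) :=
    integrable_finset_sum _ fun i _ => IBk i
  have hg : Integrable (fun ξ => γ ^ 2 * ∑ i, (T i ξ) ^ 2) μξ :=
    (integrable_finset_sum _ fun i _ => hTsqint i).const_mul _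
  have IC : Integrable (fun z : (Fin d → ℝ) × (Fin (m * d) → ℝ) =>
      γ ^ 2 * ∑ i, (T i z.2) ^ 2) (μw.prod μξ) :=
    ((integrable_const (1 : ℝ)).mul_prod hg).congr (Eventually.of_forall fun z => one_mul _)
  -- compute the three integrals
  have hIA : ∫ z, β ^ 2 * ∑ i, z.1 i ^ 2 ∂(μw.prod μξ) = β ^ 2 := by
    rw [integral_congr_ae he, integral_const]
    simp
  have hIB : ∫ z, ∑ i, (2 * β * γ) * (z.1 i * T i z.2) ∂(μw.prod μξ) = 0 := by
    rw [integral_finset_sum _ fun i _ => IBk i]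
    refine Finset.sum_eq_zero fun i _ => ?_
    have hprod_i : (∫ z : (Fin d → ℝ) × (Fin (m * d) → ℝ), z.1 i * T i z.2 ∂(μw.prod μξ))
        = (∫ w : (Fin d → ℝ), w i ∂μw) * ∫ ξ : (Fin (m * d) → ℝ), T i ξ ∂μξ :=
      integral_prod_mul (fun w : Fin d → ℝ => w i) (T i)
    rw [integral_const_mul, hprod_i, hTzero, mul_zero, mul_zero]
  have hIC : ∫ z, γ ^ 2 * ∑ i, (T i z.2) ^ 2 ∂(μw.prod μξ) = γ ^ 2 * (a * ((m : ℝ) * d * d)) := by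
    have h1 : ∫ z, γ ^ 2 * ∑ i, (T i z.2) ^ 2 ∂(μw.prod μξ)
        = (∫ _ : Fin d → ℝ, (1 : ℝ) ∂μw) * ∫ ξ, γ ^ 2 * ∑ i, (T i ξ) ^ 2 ∂μξ := by
      rw [← integral_prod_mul (fun _ : Fin d → ℝ => (1 : ℝ)) (fun ξ => γ ^ 2 * ∑ i, (T i ξ) ^ 2)]
      exact integral_congr_ae (Eventually.of_forall fun z => (one_mul _).symm)
    rw [h1, integral_const, integral_const_mul,
      integral_finset_sum _ fun i _ => hTsqint i, hTsqtotal]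
    simp
  -- put everything together
  rw [show (fun p : (Fin d → ℝ) × (Fin (m * d) → ℝ) => ∑ i, (wRR p i - p.1 i) ^ 2)
      = fun z => β ^ 2 * (∑ i, z.1 i ^ 2)
          + ((∑ i, (2 * β * γ) * (z.1 i * T i z.2)) + γ ^ 2 * ∑ i, (T i z.2) ^ 2) from
    funext fun z => hsplit z]
  have IBC : Integrable (fun z : (Fin d → ℝ) × (Fin (m * d) → ℝ) =>
      (∑ i, (2 * β * γ) * (z.1 i * T i z.2)) + γ ^ 2 * ∑ i, (T i z.2) ^ 2) (μw.prod μξ) :=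
    IB.add IC
  rw [integral_add IA IBC, integral_add IB IC, hIA, hIB, hIC]
  have hma : (0 : ℝ) < (m : ℝ) + a := by positivity
  rw [hβ, hγ, hcdef]
  have hd' : (d : ℝ) ≠ 0 := ne_of_gt hdR
  field_simp
  ring
end

section
/- In the batch EG± algorithm with v₁⁺ = v₁⁻ = (1/(2d))·𝟏 and w₁ = 0, suppose the (normalized) gradient at the first step equals ∇L(w₁) = 2(w₁ − e₁ − ζ) for some vector ζ ∈ ℝ^d, so that after one update with learning rate η the weights are v_{2,i}^± = exp(±2η(δ_{1i} + ζ_i))/Z₂ with Z₂ = Σ_{i=1}^d [exp(2η(δ_{1i} + ζ_i)) + exp(−2η(δ_{1i} + ζ_i))]. If |ζ_i| ≤ 1/4 for all i = 1,…,d, then v_{2,1}⁺ ≥ 1/(1 + (2d−1)e^{−η}), v_{2,1}⁻ ≤ e^{−2η}, and consequently the error satisfies e(w₂) ≤ 2(1 − v_{2,1}⁺ + v_{2,1}⁻) ≤ 2d·e^{−η}. -/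
private lemma cosh_bound {x c : ℝ} (h : |x| ≤ c) :
    Real.exp x + Real.exp (-x) ≤ Real.exp c + Real.exp (-c) := by
  obtain ⟨h1, h2⟩ := abs_le.mp h
  have e1 : Real.exp x ≤ Real.exp c := Real.exp_le_exp.mpr h2
  have e2 : Real.exp (-x) ≤ Real.exp c := Real.exp_le_exp.mpr (by linarith)
  have m1 : Real.exp x * Real.exp (-x) = 1 := by rw [← Real.exp_add]; simp
  have m2 : Real.exp c * Real.exp (-c) = 1 := by rw [← Real.exp_add]; simp
  nlinarith [mul_nonneg (sub_nonneg.mpr e1) (sub_nonneg.mpr e2), Real.exp_pos c]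

set_option maxHeartbeats 1000000 in
private lemma eg_aux (D A B S t s : ℝ) (hD : 1 ≤ D) (hts : t * s = 1) (ht1 : 1 ≤ t)
    (hs0 : 0 < s) (hA3 : t^3 ≤ A) (hB3 : B ≤ s^3) (hAB : A * B = 1)
    (hBpos : 0 < B) (hSnn : 0 ≤ S) (hSle : S ≤ (D - 1) * (t + s)) :
    A + B + S ≤ A * (1 + (2*D - 1) * (s*s)) ∧ B ≤ (s*s*(s*s)) * (A + B + S) ∧
    B + B + S ≤ D * (s*s) * (A + B + S) ∧ B ≤ A := by
  have ht0 : (0:ℝ) < t := lt_of_lt_of_le one_pos ht1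
  have hs1 : s ≤ 1 := by nlinarith
  have hss : s*s ≤ 1 := by nlinarith
  have hs3s : s^3 ≤ s := by nlinarith
  have htt : 1 ≤ t*t := by nlinarith
  have ht3 : (1:ℝ) ≤ t^3 := by nlinarith
  have hApos : (0:ℝ) < A := by nlinarith
  have hAs2 : t ≤ A * (s*s) := by
    have h1 : t^3*(s*s) = t := by
      have h2 : t^3*(s*s) = t*((t*s)*(t*s)) := by ring
      rw [h2, hts]; ring
    calc t = t^3*(s*s) := h1.symm
      _ ≤ A * (s*s) := mul_le_mul_of_nonneg_right hA3 (by positivity)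
  have hBA : B ≤ A := by linarith
  refine ⟨?_, ?_, ?_, hBA⟩
  · have hBle : B ≤ A*(s*s) := by linarith
    have hts' : t + s ≤ 2*(A*(s*s)) := by linarith
    have hSle2 : S ≤ 2*(D-1)*(A*(s*s)) := by
      have h := mul_le_mul_of_nonneg_left hts' (by linarith : (0:ℝ) ≤ D - 1)
      nlinarith [h]
    nlinarith [hBle, hSle2]
  · have h1 : s ≤ (s*s*(s*s)) * A := by
      have h2 : (s*s*(s*s))*t^3 = s := by
        have h3 : (s*s*(s*s))*t^3 = s*((t*s)*(t*s)*(t*s)) := by ring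
        rw [h3, hts]; ring
      calc s = (s*s*(s*s))*t^3 := h2.symm
        _ ≤ (s*s*(s*s))*A := mul_le_mul_of_nonneg_left hA3 (by positivity)
    have h4 : (0:ℝ) ≤ (s*s*(s*s))*(B+S) :=
      mul_nonneg (by positivity) (by linarith)
    nlinarith [h1, h4]
  · have keyA : 2*B ≤ (s*s)*(A+B) := by
      have hAA : t^3*t^3 ≤ A*A := mul_le_mul hA3 hA3 (by positivity) hApos.le
      have ht4 : t^4 ≤ (s*s)*(A*A) := by
        have h5 : (s*s)*(t^3*t^3) = t^4 := by
          have h6 : (s*s)*(t^3*t^3) = t^4*((t*s)*(t*s)) := by ring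
          rw [h6, hts]; ring
        have h7 := mul_le_mul_of_nonneg_left hAA (by positivity : (0:ℝ) ≤ s*s)
        linarith [h5, h7]
      have h6 : (2:ℝ) ≤ (s*s)*(A*A) + s*s := by
        nlinarith [ht4, sq_nonneg (t - s), sq_nonneg (t*t - 1), htt, hts]
      have h7 : (s*s)*(A*A)*B = (s*s)*A := by
        rw [show (s*s)*(A*A)*B = (s*s)*A*(A*B) from by ring, hAB]; ring
      have h8 := mul_le_mul_of_nonneg_right h6 hBpos.le
      nlinarith [h8, h7]
    have keyC : S ≤ (D-1) * ((s*s)*(A+B)) + D*(s*s)*S := by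
      rcases le_or_gt 1 (D*(s*s)) with h | h
      · have h8 : (0:ℝ) ≤ (D*(s*s)-1)*S := mul_nonneg (by linarith) hSnn
        have h9 : (0:ℝ) ≤ (D-1) * ((s*s)*(A+B)) :=
          mul_nonneg (by linarith) (mul_nonneg (by positivity) (by linarith))
        nlinarith [h8, h9]
      · have hDss : s*s ≤ D*(s*s) := by
          have : (0:ℝ) ≤ (D-1)*(s*s) := mul_nonneg (by linarith) (by positivity)
          linarith
        have h10 : (t+s)*(1-D*(s*s)) ≤ (t+s)*(1-(s*s)) :=
          mul_le_mul_of_nonneg_left (by linarith) (by linarith)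
        have h11 : (t+s)*(1-(s*s)) = t - s*(s*s) := by
          have h12 : (t+s)*(1-(s*s)) = t + s - (t*s)*s - s*(s*s) := by ring
          rw [h12, hts]; ring
        have hsB : (0:ℝ) ≤ (s*s)*B := mul_nonneg (by positivity) hBpos.le
        have hsss : (0:ℝ) ≤ s*(s*s) := by positivity
        have hinner : (t+s)*(1 - D*(s*s)) ≤ (s*s)*(A+B) := by nlinarith [h10, h11, hAs2, hsB, hsss]
        have h13 : S*(1-D*(s*s)) ≤ ((D-1)*(t+s))*(1-D*(s*s)) :=
          mul_le_mul_of_nonneg_right hSle (by linarith)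
        have h14 : ((D-1)*(t+s))*(1-D*(s*s)) ≤ (D-1)*((s*s)*(A+B)) := by
          calc ((D-1)*(t+s))*(1-D*(s*s)) = (D-1)*((t+s)*(1-D*(s*s))) := by ring
            _ ≤ (D-1)*((s*s)*(A+B)) := mul_le_mul_of_nonneg_left hinner (by linarith)
        nlinarith [h13, h14]
    nlinarith [keyA, keyC]

set_option maxHeartbeats 1000000 in
/-- **One step of batch EG± under bounded noise.**  In the batch EG± algorithm with
`v₁⁺ = v₁⁻ = (1/(2d))·𝟏` and `w₁ = 0`, suppose the gradient at the first step is
`∇L(w₁) = 2(w₁ - e₁ - ζ)`, so that after one update with learning rate `η ≥ 0` the weights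
are `v₂ᵢ± = exp(±2η(δ_{1i} + ζᵢ))/Z₂` with
`Z₂ = ∑ᵢ [exp(2η(δ_{1i} + ζᵢ)) + exp(-2η(δ_{1i} + ζᵢ))]`.  If `|ζᵢ| ≤ 1/4` for all `i`,
then `v₂₁⁺ ≥ 1/(1 + (2d-1)e^{-η})`, `v₂₁⁻ ≤ e^{-2η}`, and the error satisfies
`e(w₂) ≤ 2(1 - v₂₁⁺ + v₂₁⁻) ≤ 2d·e^{-η}`, where `e(ŵ) = ‖ŵ - e₁‖²`. -/
theorem eg_pm_one_step (d : ℕ) (hd : 0 < d) (η : ℝ) (hη : 0 ≤ η) (ζ : Fin d → ℝ)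
    (hζ : ∀ i, |ζ i| ≤ 1 / 4) :
    let e1 : Fin d → ℝ := fun i => if (i : ℕ) = 0 then 1 else 0
    let Z2 : ℝ := ∑ i, (Real.exp (2 * η * (e1 i + ζ i)) + Real.exp (-(2 * η * (e1 i + ζ i))))
    let v2p : Fin d → ℝ := fun i => Real.exp (2 * η * (e1 i + ζ i)) / Z2
    let v2m : Fin d → ℝ := fun i => Real.exp (-(2 * η * (e1 i + ζ i))) / Z2
    let w2 : Fin d → ℝ := fun i => v2p i - v2m i
    v2p ⟨0, hd⟩ ≥ 1 / (1 + (2 * (d : ℝ) - 1) * Real.exp (-η)) ∧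
    v2m ⟨0, hd⟩ ≤ Real.exp (-(2 * η)) ∧
    (∑ i, (w2 i - e1 i) ^ 2) ≤ 2 * (1 - v2p ⟨0, hd⟩ + v2m ⟨0, hd⟩) ∧
    2 * (1 - v2p ⟨0, hd⟩ + v2m ⟨0, hd⟩) ≤ 2 * (d : ℝ) * Real.exp (-η) := by
  intro e1 Z2 v2p v2m w2
  have hD : (1:ℝ) ≤ (d:ℝ) := by exact_mod_cast hd
  set i0 : Fin d := ⟨0, hd⟩ with hi0def
  have he10 : e1 i0 = 1 := if_pos rfl
  have he1ne : ∀ i : Fin d, i ≠ i0 → e1 i = 0 := by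
    intro i hi
    have : (i:ℕ) ≠ 0 := fun h => hi (Fin.ext h)
    exact if_neg this
  obtain ⟨hz1, hz2⟩ := abs_le.mp (hζ i0)
  set t := Real.exp (η/2) with htdef
  set s := Real.exp (-(η/2)) with hsdef
  have hts : t * s = 1 := by rw [htdef, hsdef, ← Real.exp_add]; simp
  have ht1 : (1:ℝ) ≤ t := by rw [htdef]; exact Real.one_le_exp (by linarith)
  have hs0 : (0:ℝ) < s := by rw [hsdef]; exact Real.exp_pos _
  have hexpm : Real.exp (-η) = s * s := by
    rw [hsdef, ← Real.exp_add]; congr 1; ring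
  have hexpm2 : Real.exp (-(2*η)) = s*s*(s*s) := by
    rw [← hexpm, ← Real.exp_add]; congr 1; ring
  set A := Real.exp (2 * η * (e1 i0 + ζ i0)) with hAdef
  set B := Real.exp (-(2 * η * (e1 i0 + ζ i0))) with hBdef
  have hApos : (0:ℝ) < A := by rw [hAdef]; exact Real.exp_pos _
  have hBpos : (0:ℝ) < B := by rw [hBdef]; exact Real.exp_pos _
  have hAB : A * B = 1 := by rw [hAdef, hBdef, ← Real.exp_add]; simp
  have ht3 : t^3 = Real.exp (3*(η/2)) := by
    rw [htdef, ← Real.exp_nat_mul]; norm_num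
  have hs3 : s^3 = Real.exp (3*(-(η/2))) := by
    rw [hsdef, ← Real.exp_nat_mul]; norm_num
  have hA3 : t^3 ≤ A := by
    rw [ht3, hAdef, he10]
    apply Real.exp_le_exp.mpr
    nlinarith
  have hB3 : B ≤ s^3 := by
    rw [hs3, hBdef, he10]
    apply Real.exp_le_exp.mpr
    nlinarith
  set S := ∑ i ∈ Finset.univ.erase i0,
      (Real.exp (2 * η * (e1 i + ζ i)) + Real.exp (-(2 * η * (e1 i + ζ i)))) with hSdef
  have hZ : Z2 = A + B + S := by
    rw [show Z2 = ∑ i, (Real.exp (2 * η * (e1 i + ζ i)) + Real.exp (-(2 * η * (e1 i + ζ i))))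
        from rfl,
      ← Finset.add_sum_erase _ _ (Finset.mem_univ i0)]
  have hSnn : (0:ℝ) ≤ S := by
    rw [hSdef]
    exact Finset.sum_nonneg fun i _ => by positivity
  have hcard : (((Finset.univ.erase i0).card : ℕ) : ℝ) = (d:ℝ) - 1 := by
    rw [Finset.card_erase_of_mem (Finset.mem_univ i0), Finset.card_univ, Fintype.card_fin,
      Nat.cast_sub hd]
    simp
  have hSle : S ≤ ((d:ℝ) - 1) * (t + s) := by
    have hb : ∀ i ∈ Finset.univ.erase i0,
        (Real.exp (2 * η * (e1 i + ζ i)) + Real.exp (-(2 * η * (e1 i + ζ i)))) ≤ t + s := by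
      intro i hi
      rw [he1ne i (Finset.mem_erase.mp hi).1, htdef, hsdef]
      apply cosh_bound
      rw [abs_mul, abs_of_nonneg (by linarith : (0:ℝ) ≤ 2*η)]
      have h4 := hζ i
      have h5 := abs_nonneg (ζ i)
      rw [zero_add]
      nlinarith
    calc S ≤ (Finset.univ.erase i0).card • (t + s) := hSdef ▸ Finset.sum_le_card_nsmul _ _ _ hb
      _ = ((d:ℝ) - 1) * (t + s) := by rw [nsmul_eq_mul, hcard]
  obtain ⟨key1, key2, key4, hBA⟩ := eg_aux (d:ℝ) A B S t s hD hts ht1 hs0 hA3 hB3 hAB hBpos hSnn hSle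
  have hZpos : (0:ℝ) < Z2 := by rw [hZ]; linarith only [hApos, hBpos, hSnn]
  -- Part 1
  have hden : (0:ℝ) < 1 + (2*(d:ℝ) - 1) * Real.exp (-η) := by
    rw [hexpm]
    have h1 : (0:ℝ) < (2*(d:ℝ)-1)*(s*s) :=
      mul_pos (by linarith only [hD]) (mul_pos hs0 hs0)
    linarith only [h1]
  have goal1 : 1 / (1 + (2*(d:ℝ) - 1) * Real.exp (-η)) ≤ A / Z2 := by
    rw [div_le_div_iff₀ hden hZpos, hexpm, hZ]
    linarith only [key1]
  -- Part 2
  have goal2 : B / Z2 ≤ Real.exp (-(2*η)) := by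
    rw [div_le_iff₀ hZpos, hexpm2, hZ]
    linarith only [key2]
  -- Part 4
  have goal4 : 2*(1 - A/Z2 + B/Z2) ≤ 2*(d:ℝ)*Real.exp (-η) := by
    rw [hexpm]
    have h15 : 1 - A/Z2 + B/Z2 = (Z2 - A + B)/Z2 := by field_simp
    have h16 : (Z2 - A + B)/Z2 ≤ (d:ℝ)*(s*s) := by
      rw [div_le_iff₀ hZpos, hZ]
      linarith only [key4]
    rw [h15]
    linarith only [h16]
  -- Part 3
  have hv2p : ∀ i, v2p i = Real.exp (2 * η * (e1 i + ζ i)) / Z2 := fun i => rfl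
  have hv2m : ∀ i, v2m i = Real.exp (-(2 * η * (e1 i + ζ i))) / Z2 := fun i => rfl
  have hw2 : ∀ i, w2 i = v2p i - v2m i := fun i => rfl
  have hv2p0 : v2p i0 = A / Z2 := rfl
  have hv2m0 : v2m i0 = B / Z2 := rfl
  have hPnn : ∀ i, 0 ≤ v2p i := fun i => by
    rw [hv2p i]; exact div_nonneg (Real.exp_pos _).le hZpos.le
  have hMnn : ∀ i, 0 ≤ v2m i := fun i => by
    rw [hv2m i]; exact div_nonneg (Real.exp_pos _).le hZpos.le
  have hsum : ∑ i, (v2p i + v2m i) = 1 := by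
    have h17 : ∀ i ∈ (Finset.univ : Finset (Fin d)), v2p i + v2m i
        = (Real.exp (2 * η * (e1 i + ζ i)) + Real.exp (-(2 * η * (e1 i + ζ i)))) / Z2 := by
      intro i _
      rw [hv2p i, hv2m i, ← add_div]
    rw [Finset.sum_congr rfl h17, ← Finset.sum_div]
    exact div_self hZpos.ne'
  have hPM : ∀ i, v2p i + v2m i ≤ 1 := by
    intro i
    have h18 := Finset.single_le_sum (f := fun j => v2p j + v2m j)
      (fun j _ => add_nonneg (hPnn j) (hMnn j)) (Finset.mem_univ i)
    rw [hsum] at h18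
    exact h18
  have hMP0 : v2m i0 ≤ v2p i0 := by
    rw [hv2p0, hv2m0, div_le_div_iff₀ hZpos hZpos]
    exact mul_le_mul_of_nonneg_right hBA hZpos.le
  have habs : ∀ i, |w2 i - e1 i| ≤ 1 := by
    intro i
    rw [hw2 i]
    rcases eq_or_ne i i0 with h | h
    · rw [h, he10, abs_le]
      constructor
      · linarith only [hMP0]
      · linarith only [hPM i0, hMnn i0]
    · rw [he1ne i h, sub_zero, abs_le]
      constructor
      · linarith only [hPnn i, hMnn i, hPM i]
      · linarith only [hPnn i, hMnn i, hPM i]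
  have step1 : ∑ i, (w2 i - e1 i)^2 ≤ ∑ i, |w2 i - e1 i| := by
    apply Finset.sum_le_sum
    intro i _
    calc (w2 i - e1 i)^2 = |w2 i - e1 i| * |w2 i - e1 i| := by
          rw [abs_mul_abs_self]; ring
      _ ≤ 1 * |w2 i - e1 i| := mul_le_mul_of_nonneg_right (habs i) (abs_nonneg _)
      _ = |w2 i - e1 i| := one_mul _
  have step2 : ∑ i, |w2 i - e1 i|
      = |w2 i0 - e1 i0| + ∑ i ∈ Finset.univ.erase i0, |w2 i - e1 i| :=
    (Finset.add_sum_erase _ (fun i => |w2 i - e1 i|) (Finset.mem_univ i0)).symm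
  have term0 : |w2 i0 - e1 i0| = 1 - v2p i0 + v2m i0 := by
    rw [hw2 i0, he10, abs_of_nonpos (by linarith only [hPM i0, hMnn i0])]
    ring
  have erasebound : ∑ i ∈ Finset.univ.erase i0, |w2 i - e1 i|
      ≤ ∑ i ∈ Finset.univ.erase i0, (v2p i + v2m i) := by
    apply Finset.sum_le_sum
    intro i hi
    rw [hw2 i, he1ne i (Finset.mem_erase.mp hi).1, sub_zero, abs_le]
    exact ⟨by linarith only [hPnn i, hMnn i], by linarith only [hPnn i, hMnn i]⟩
  have erasesum : (v2p i0 + v2m i0) + ∑ i ∈ Finset.univ.erase i0, (v2p i + v2m i) = 1 := by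
    rw [← hsum]
    exact Finset.add_sum_erase _ (fun i => v2p i + v2m i) (Finset.mem_univ i0)
  have goal3 : ∑ i, (w2 i - e1 i)^2 ≤ 2*(1 - v2p i0 + v2m i0) := by
    calc ∑ i, (w2 i - e1 i)^2 ≤ ∑ i, |w2 i - e1 i| := step1
      _ = |w2 i0 - e1 i0| + ∑ i ∈ Finset.univ.erase i0, |w2 i - e1 i| := step2
      _ ≤ (1 - v2p i0 + v2m i0) + (1 - (v2p i0 + v2m i0)) := by
          rw [term0]; linarith only [erasebound, erasesum]
      _ ≤ 2*(1 - v2p i0 + v2m i0) := by linarith only [hMnn i0]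
  exact ⟨goal1, goal2, goal3, goal4⟩
end

section
/- Let L: ℝ^d → ℝ be differentiable and let u: ℝ → ℝ^d satisfy the gradient-flow equation u̇(t) = −∇_u [L(u(t)²/4)], where the square is taken componentwise (i.e., gradient flow on L after the componentwise reparameterization w = û²/4, equivalently û = 2√w). Then w(t) = u(t)²/4 (componentwise) satisfies the continuous-time unnormalized exponentiated gradient (EGU) equation ẇ_i(t) = −w_i(t)·(∇L(w(t)))_i for every coordinate i. -/
lemma sq4_hasFDerivAt (d : ℕ) (a : Fin d → ℝ) :
    HasFDerivAt (fun x : Fin d → ℝ => fun j => (x j) ^ 2 / 4)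
      (ContinuousLinearMap.pi fun j => (a j / 2) • (ContinuousLinearMap.proj j
        : (Fin d → ℝ) →L[ℝ] ℝ)) a := by
  apply hasFDerivAt_pi.2
  intro j
  have h0 := (ContinuousLinearMap.proj j : (Fin d → ℝ) →L[ℝ] ℝ).hasFDerivAt (x := a)
  have h : HasFDerivAt (fun x : Fin d → ℝ => (x j) ^ 2 / 4)
      ((1 / 4 : ℝ) • (a j • (ContinuousLinearMap.proj j : (Fin d → ℝ) →L[ℝ] ℝ)
        + a j • (ContinuousLinearMap.proj j : (Fin d → ℝ) →L[ℝ] ℝ))) a := by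
    have hm := h0.mul h0
    have : HasFDerivAt (fun x : Fin d → ℝ => (x j) ^ 2)
        (a j • (ContinuousLinearMap.proj j : (Fin d → ℝ) →L[ℝ] ℝ)
          + a j • (ContinuousLinearMap.proj j : (Fin d → ℝ) →L[ℝ] ℝ)) a := by
      simpa [pow_two, Pi.mul_def] using hm
    simpa [div_eq_inv_mul, one_div, Pi.smul_def, smul_eq_mul] using this.const_smul (1 / 4 : ℝ)
  refine h.congr_fderiv ?_
  ext v
  simp [ContinuousLinearMap.smul_apply]
  ring

/-- **Gradient flow on the reparameterization `w = u²/4` is continuous-time EGU.**  Let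
`L : ℝ^d → ℝ` be differentiable and let `u : ℝ → ℝ^d` satisfy the gradient-flow equation
`u̇ᵢ(t) = -∂/∂uᵢ [L(u(t)²/4)]` in every coordinate (partial derivatives are written as the
Fréchet derivative applied to the basis vector `Pi.single i 1`).  Then `w(t) = u(t)²/4`
(componentwise) satisfies the continuous-time unnormalized exponentiated gradient equation
`ẇᵢ(t) = -wᵢ(t) * (∇L(w(t)))ᵢ` for every coordinate `i`. -/
theorem reparam_sq_gradient_flow_is_egu (d : ℕ) (L : (Fin d → ℝ) → ℝ)
    (hL : Differentiable ℝ L) (u : ℝ → Fin d → ℝ)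
    (hu : ∀ (t : ℝ) (i : Fin d),
      HasDerivAt (fun s => u s i)
        (-(fderiv ℝ (fun x : Fin d → ℝ => L fun j => (x j) ^ 2 / 4) (u t)) (Pi.single i 1)) t) :
    ∀ (t : ℝ) (i : Fin d),
      HasDerivAt (fun s => (u s i) ^ 2 / 4)
        (-((u t i) ^ 2 / 4) *
          (fderiv ℝ L fun j => (u t j) ^ 2 / 4) (Pi.single i 1)) t := by
  intro t i
  set a := u t with ha
  set g := (fderiv ℝ L fun j => (a j) ^ 2 / 4) (Pi.single i 1) with hg
  have hinner := sq4_hasFDerivAt d a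
  have hcomp : HasFDerivAt (fun x : Fin d → ℝ => L fun j => (x j) ^ 2 / 4)
      ((fderiv ℝ L fun j => (a j) ^ 2 / 4).comp
        (ContinuousLinearMap.pi fun j => (a j / 2) • (ContinuousLinearMap.proj j
          : (Fin d → ℝ) →L[ℝ] ℝ))) a :=
    ((hL _).hasFDerivAt).comp a hinner
  have hfd : (fderiv ℝ (fun x : Fin d → ℝ => L fun j => (x j) ^ 2 / 4) a) (Pi.single i 1)
      = (a i / 2) * g := by
    rw [hcomp.fderiv]
    have hsingle : (ContinuousLinearMap.pi fun j => (a j / 2) •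
        (ContinuousLinearMap.proj j : (Fin d → ℝ) →L[ℝ] ℝ)) (Pi.single i 1)
        = Pi.single i (a i / 2) := by
      ext j
      by_cases hji : j = i
      · subst hji; simp
      · simp [Pi.single_apply, hji]
    rw [ContinuousLinearMap.comp_apply, hsingle]
    have h2 : (Pi.single i (a i / 2) : Fin d → ℝ) = (a i / 2) • (Pi.single i 1 : Fin d → ℝ) := by
      rw [← Pi.single_smul]
      simp
    rw [h2, map_smul, smul_eq_mul]
  have h1 : HasDerivAt (fun s => u s i) (-(a i / 2 * g)) t := by
    have := hu t i
    rwa [← ha, hfd] at this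
  have h2 := (h1.pow 2).div_const 4
  refine h2.congr_deriv ?_
  rw [ha]
  push_cast
  ring
end

section
/- Fix a real number a (the least-squares coordinate w^LS_i) and an initial value w₀ ≠ a. Let ξ = sign(w₀ − a) and define τ(t) = arsinh((1 + a·w₀)/(w₀ − a)) + 2t·ξ·√(a² + 1) and w(t) = (a·sinh τ(t) + 1)/(sinh τ(t) − a). Then on any interval containing 0 on which sinh τ(t) ≠ a, the function w is the solution of the continuous-time EGU± trajectory equation for the quadratic loss: w'(t) = 2·√(w(t)² + 1)·(a − w(t)), with w(0) = w₀. -/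
lemma egupm_aux (a s q c ξ : ℝ) (hd : s - a ≠ 0)
    (hq : q ^ 2 = a ^ 2 + 1) (hq0 : 0 ≤ q)
    (hc : c ^ 2 = s ^ 2 + 1) (hc0 : 0 < c)
    (hξ : ξ * |s - a| = s - a) :
    2 * Real.sqrt (((a * s + 1) / (s - a)) ^ 2 + 1) * (a - (a * s + 1) / (s - a))
      = (a * (c * (2 * ξ * q)) * (s - a) - (a * s + 1) * (c * (2 * ξ * q))) / (s - a) ^ 2 := by
  have habs : |s - a| ≠ 0 := abs_ne_zero.mpr hd
  have habsp : 0 < |s - a| := abs_pos.mpr hd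
  have h1 : ((a * s + 1) / (s - a)) ^ 2 + 1 = (q * c / |s - a|) ^ 2 := by
    rw [div_pow, div_pow, sq_abs]
    field_simp
    linear_combination (-(c ^ 2)) * hq - (a ^ 2 + 1) * hc
  rw [h1, Real.sqrt_sq (by positivity)]
  have hξ' : ξ = (s - a) / |s - a| := (eq_div_iff habs).mpr hξ
  rw [hξ']
  have habs2 : |s - a| ^ 2 = (s - a) ^ 2 := sq_abs _
  field_simp

/-- **EGU± trajectory.** Fix `a` (the least-squares coordinate `w^LS_i`) and an initial value
`w₀ ≠ a`.  Let `ξ = sign (w₀ - a)`, `τ t = arsinh ((1 + a*w₀)/(w₀ - a)) + 2*t*ξ*√(a²+1)` and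
`w t = (a * sinh (τ t) + 1) / (sinh (τ t) - a)`.  Then on any interval `I` containing `0` on
which `sinh (τ t) ≠ a`, the function `w` is the solution of the continuous-time EGU±
trajectory equation `w' = 2 * √(w² + 1) * (a - w)` with `w 0 = w₀`. -/
theorem egupm_trajectory (a w₀ : ℝ) (hw₀ : w₀ ≠ a) :
    let ξ : ℝ := Real.sign (w₀ - a)
    let τ : ℝ → ℝ := fun t =>
      Real.arsinh ((1 + a * w₀) / (w₀ - a)) + 2 * t * ξ * Real.sqrt (a ^ 2 + 1)
    let w : ℝ → ℝ := fun t => (a * Real.sinh (τ t) + 1) / (Real.sinh (τ t) - a)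
    ∀ I : Set ℝ, I.OrdConnected → (0 : ℝ) ∈ I → (∀ s ∈ I, Real.sinh (τ s) ≠ a) →
      w 0 = w₀ ∧ ∀ t ∈ I, HasDerivAt w (2 * Real.sqrt ((w t) ^ 2 + 1) * (a - w t)) t := by
  intro ξ τ w I hI h0 hs
  have hsub : w₀ - a ≠ 0 := sub_ne_zero.mpr hw₀
  have ha1 : (0:ℝ) < a ^ 2 + 1 := by positivity
  have hq2 : Real.sqrt (a ^ 2 + 1) ^ 2 = a ^ 2 + 1 := Real.sq_sqrt ha1.le
  have hs0 : Real.sinh (τ 0) = (1 + a * w₀) / (w₀ - a) := by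
    simp [τ, Real.sinh_arsinh]
  have hf0 : Real.sinh (τ 0) - a = (a ^ 2 + 1) / (w₀ - a) := by
    rw [hs0]; field_simp; ring
  have hw00 : w 0 = w₀ := by
    have hn : a * Real.sinh (τ 0) + 1 = (a ^ 2 + 1) * w₀ / (w₀ - a) := by
      rw [hs0]; field_simp; ring
    simp only [w, hn, hf0]
    rw [div_div_div_cancel_right₀]
    · exact mul_div_cancel_left₀ w₀ ha1.ne'
    · exact hsub
  refine ⟨hw00, ?_⟩
  have hτc : Continuous τ := by
    apply Continuous.add continuous_const
    exact ((continuous_const.mul continuous_id).mul continuous_const).mul continuous_const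
  have hfc : Continuous fun t => Real.sinh (τ t) - a :=
    (Real.continuous_sinh.comp hτc).sub continuous_const
  have hprod : ∀ t ∈ I, 0 < (Real.sinh (τ t) - a) * (Real.sinh (τ 0) - a) := by
    intro t ht
    rcases lt_trichotomy ((Real.sinh (τ t) - a) * (Real.sinh (τ 0) - a)) 0 with h | h | h
    · exfalso
      have h0m : (0:ℝ) ∈ Set.uIcc (Real.sinh (τ 0) - a) (Real.sinh (τ t) - a) := by
        rcases mul_neg_iff.1 h with ⟨h1, h2⟩ | ⟨h1, h2⟩
        · exact Set.mem_uIcc.2 (Or.inl ⟨h2.le, h1.le⟩)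
        · exact Set.mem_uIcc.2 (Or.inr ⟨h1.le, h2.le⟩)
      obtain ⟨c, hc, hc0⟩ := intermediate_value_uIcc (f := fun t => Real.sinh (τ t) - a)
        (a := (0:ℝ)) (b := t) hfc.continuousOn h0m
      have hcI : c ∈ I := hI.uIcc_subset h0 ht hc
      exact hs c hcI (by linarith [sub_eq_zero.1 hc0])
    · exfalso
      rcases mul_eq_zero.1 h with h | h
      · exact hs t ht (by linarith [sub_eq_zero.1 h])
      · exact hs 0 h0 (by linarith [sub_eq_zero.1 h])
    · exact h
  intro t ht
  have hd : Real.sinh (τ t) - a ≠ 0 := sub_ne_zero.mpr (hs t ht)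
  have hξd : ξ * |Real.sinh (τ t) - a| = Real.sinh (τ t) - a := by
    have hp := hprod t ht
    rw [hf0] at hp
    rcases lt_trichotomy (w₀ - a) 0 with hwa | hwa | hwa
    · have hξ1 : ξ = -1 := Real.sign_of_neg hwa
      have hdn : Real.sinh (τ t) - a < 0 := by
        by_contra hdn
        push_neg at hdn
        have : (a ^ 2 + 1) / (w₀ - a) < 0 := div_neg_of_pos_of_neg ha1 hwa
        nlinarith
      rw [hξ1, abs_of_neg hdn]; ring
    · exact absurd hwa hsub
    · have hξ1 : ξ = 1 := Real.sign_of_pos hwa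
      have hdp : 0 < Real.sinh (τ t) - a := by
        by_contra hdn
        push_neg at hdn
        have : 0 < (a ^ 2 + 1) / (w₀ - a) := div_pos ha1 hwa
        nlinarith
      rw [hξ1, abs_of_pos hdp]; ring
  have hτ' : HasDerivAt τ (2 * ξ * Real.sqrt (a ^ 2 + 1)) t := by
    have h1 : HasDerivAt (fun t : ℝ => 2 * t * ξ * Real.sqrt (a ^ 2 + 1))
        (2 * ξ * Real.sqrt (a ^ 2 + 1)) t := by
      simpa [mul_comm, mul_assoc, mul_left_comm] using
        (((hasDerivAt_id t).const_mul 2).mul_const ξ).mul_const (Real.sqrt (a ^ 2 + 1))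
    exact h1.const_add _
  have hsinh : HasDerivAt (fun t => Real.sinh (τ t))
      (Real.cosh (τ t) * (2 * ξ * Real.sqrt (a ^ 2 + 1))) t := hτ'.sinh
  have hN : HasDerivAt (fun t => a * Real.sinh (τ t) + 1)
      (a * (Real.cosh (τ t) * (2 * ξ * Real.sqrt (a ^ 2 + 1)))) t :=
    (hsinh.const_mul a).add_const 1
  have hD : HasDerivAt (fun t => Real.sinh (τ t) - a)
      (Real.cosh (τ t) * (2 * ξ * Real.sqrt (a ^ 2 + 1))) t := hsinh.sub_const a
  have hquot := hN.div hD hd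
  have hcosh : 0 < Real.cosh (τ t) := Real.cosh_pos _
  have hcsq : Real.cosh (τ t) ^ 2 = Real.sinh (τ t) ^ 2 + 1 := by
    rw [Real.cosh_sq']; ring
  refine hquot.congr_deriv ?_
  exact (egupm_aux a (Real.sinh (τ t)) (Real.sqrt (a ^ 2 + 1)) (Real.cosh (τ t)) ξ hd hq2
    (Real.sqrt_nonneg _) hcsq hcosh hξd).symm
end

section
/- Let X ∈ ℝ^{n×d}, y ∈ ℝ^n, λ > 0, and let W ∈ ℝ^{d×d} be an invertible diagonal matrix. Then W·(W·XᵀX·W + λ·I_d)⁻¹·W·Xᵀy = (XᵀX + λ·W^{−2})⁻¹·Xᵀy. Consequently, the priming predictor ŵ' = W·(X̃ᵀX̃ + λI_d)⁻¹X̃ᵀy with X̃ = XW equals the regularized least-squares solution ŵ' = argmin_{ŵ} { (1/2)·‖y − Xŵ‖² + (λ/2)·ŵᵀW^{−2}ŵ }. -/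
open Matrix

lemma symm_dot_swap {d : ℕ} {B : Matrix (Fin d) (Fin d) ℝ} (hB : Bᵀ = B)
    (u v : Fin d → ℝ) : u ⬝ᵥ (B *ᵥ v) = v ⬝ᵥ (B *ᵥ u) := by
  calc u ⬝ᵥ (B *ᵥ v) = (u ᵥ* B) ⬝ᵥ v := dotProduct_mulVec u B v
  _ = (B *ᵥ u) ⬝ᵥ v := by rw [← vecMul_transpose, hB]
  _ = v ⬝ᵥ (B *ᵥ u) := dotProduct_comm _ _

lemma dot_XtX {n d : ℕ} (X : Matrix (Fin n) (Fin d) ℝ) (u v : Fin d → ℝ) :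
    u ⬝ᵥ ((Xᵀ * X) *ᵥ v) = (X *ᵥ u) ⬝ᵥ (X *ᵥ v) := by
  rw [← mulVec_mulVec, dotProduct_mulVec, vecMul_transpose]

set_option maxHeartbeats 1600000 in
/-- **The priming predictor is a regularized least-squares solution.**  Let `X ∈ ℝ^{n×d}`,
`y ∈ ℝ^n`, `λ > 0`, and let `W ∈ ℝ^{d×d}` be an invertible diagonal matrix.  Then
`W (W XᵀX W + λ I)⁻¹ W Xᵀ y = (XᵀX + λ W⁻²)⁻¹ Xᵀ y`, and this vector is the unique minimizer
of the regularized objective `w ↦ (1/2)‖y - Xw‖² + (λ/2) wᵀ W⁻² w`. -/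
theorem priming_is_regularized_least_squares (n d : ℕ)
    (X : Matrix (Fin n) (Fin d) ℝ) (y : Fin n → ℝ) (lam : ℝ) (hlam : 0 < lam)
    (W : Matrix (Fin d) (Fin d) ℝ) (hWdiag : W.IsDiag) (hWinv : IsUnit W.det) :
    let w' : Fin d → ℝ :=
      (W * (W * (Xᵀ * X) * W + lam • (1 : Matrix (Fin d) (Fin d) ℝ))⁻¹ * W * Xᵀ) *ᵥ y
    let f : (Fin d → ℝ) → ℝ := fun w =>
      (1 / 2) * (∑ i, (y i - (X *ᵥ w) i) ^ 2) + (lam / 2) * (w ⬝ᵥ ((W ^ 2)⁻¹ *ᵥ w))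
    w' = ((Xᵀ * X + lam • (W ^ 2)⁻¹)⁻¹ * Xᵀ) *ᵥ y ∧
      (∀ w : Fin d → ℝ, f w' ≤ f w) ∧ (∀ w : Fin d → ℝ, f w = f w' → w = w') := by
  intro w' f
  set B : Matrix (Fin d) (Fin d) ℝ := (W ^ 2)⁻¹ with hBdef
  set A : Matrix (Fin d) (Fin d) ℝ := Xᵀ * X + lam • B with hAdef
  -- diagonal structure of W
  obtain ⟨g, hW⟩ : ∃ g, W = diagonal g := ⟨W.diag, hWdiag.diagonal_diag.symm⟩
  have hg : ∀ i, g i ≠ 0 := by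
    intro i hi
    rw [hW, det_diagonal] at hWinv
    exact (Finset.prod_eq_zero (Finset.mem_univ i) hi ▸ hWinv).ne_zero rfl
  have hB : B = diagonal (fun i => (g i ^ 2)⁻¹) := by
    rw [hBdef, hW, diagonal_pow]
    apply Matrix.inv_eq_right_inv
    rw [diagonal_mul_diagonal]
    convert diagonal_one using 2
    funext i
    exact mul_inv_cancel₀ (pow_ne_zero 2 (hg i))
  have hBsymm : Bᵀ = B := by rw [hB, diagonal_transpose]
  -- positive definiteness
  have hlamB : (lam • B).PosDef := by
    rw [hB, ← diagonal_smul]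
    exact Matrix.PosDef.diagonal fun i => by
      have : (0:ℝ) < g i ^ 2 := pow_two_pos_of_ne_zero (hg i)
      have : (0:ℝ) < (g i ^ 2)⁻¹ := by positivity
      simpa [smul_eq_mul] using mul_pos hlam this
  have hXtX : (Xᵀ * X).PosSemidef := by
    have := posSemidef_conjTranspose_mul_self X
    rwa [conjTranspose_eq_transpose_of_trivial] at this
  have hA : A.PosDef := Matrix.PosDef.posSemidef_add hXtX hlamB
  have hAdet : IsUnit A.det := (isUnit_iff_isUnit_det A).mp hA.isUnit
  -- the matrix identity
  have hWW : W * B * W = 1 := by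
    rw [hBdef, pow_two, Matrix.mul_inv_rev]
    calc W * (W⁻¹ * W⁻¹) * W = (W * W⁻¹) * (W⁻¹ * W) := by noncomm_ring
    _ = 1 := by rw [Matrix.mul_nonsing_inv W hWinv, Matrix.nonsing_inv_mul W hWinv, one_mul]
  have hmid : W * (Xᵀ * X) * W + lam • (1 : Matrix (Fin d) (Fin d) ℝ) = W * A * W := by
    rw [hAdef, ← hWW]
    simp only [Matrix.add_mul, Matrix.mul_add, Matrix.smul_mul, Matrix.mul_smul]
  have hmat : W * (W * (Xᵀ * X) * W + lam • (1 : Matrix (Fin d) (Fin d) ℝ))⁻¹ * W = A⁻¹ := by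
    rw [hmid, Matrix.mul_inv_rev, Matrix.mul_inv_rev]
    calc W * (W⁻¹ * (A⁻¹ * W⁻¹)) * W = (W * W⁻¹) * A⁻¹ * (W⁻¹ * W) := by noncomm_ring
    _ = A⁻¹ := by
        rw [Matrix.mul_nonsing_inv W hWinv, Matrix.nonsing_inv_mul W hWinv, one_mul,
          Matrix.mul_one]
  have hw' : w' = (A⁻¹ * Xᵀ) *ᵥ y := by
    show (W * (W * (Xᵀ * X) * W + lam • (1 : Matrix (Fin d) (Fin d) ℝ))⁻¹ * W * Xᵀ) *ᵥ y = _
    rw [hmat]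
  -- stationarity
  have hstat : A *ᵥ w' = Xᵀ *ᵥ y := by
    rw [hw', ← mulVec_mulVec, mulVec_mulVec, Matrix.mul_nonsing_inv A hAdet, one_mulVec]
  clear_value w'
  -- key identity : f w = f w' + (1/2) * quadratic form
  have key : ∀ w : Fin d → ℝ, f w = f w' + (1/2) * ((w - w') ⬝ᵥ (A *ᵥ (w - w'))) := by
    intro w
    set u : Fin d → ℝ := w - w' with hu
    set r : Fin n → ℝ := y - X *ᵥ w' with hr
    set q : Fin n → ℝ := X *ᵥ u with hq
    have hw : w = w' + u := by rw [hu]; ring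
    have hfval : ∀ v : Fin d → ℝ, f v
        = (1/2) * ((y - X *ᵥ v) ⬝ᵥ (y - X *ᵥ v)) + (lam/2) * (v ⬝ᵥ (B *ᵥ v)) := by
      intro v
      show (1 / 2) * (∑ i, (y i - (X *ᵥ v) i) ^ 2)
          + (lam / 2) * (v ⬝ᵥ ((W ^ 2)⁻¹ *ᵥ v)) = _
      rw [hBdef]
      congr 1
      congr 1
      simp [dotProduct, sq]
    -- residual expansion
    have hXw : X *ᵥ w = X *ᵥ w' + q := by rw [hw, mulVec_add]
    have e1 : (y - X *ᵥ w) ⬝ᵥ (y - X *ᵥ w)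
        = r ⬝ᵥ r - 2 * (r ⬝ᵥ q) + q ⬝ᵥ q := by
      have : y - X *ᵥ w = r - q := by rw [hXw, hr]; abel
      rw [this]
      simp only [dotProduct_sub, sub_dotProduct]
      rw [dotProduct_comm q r]
      ring
    -- regularizer expansion
    have e2 : w ⬝ᵥ (B *ᵥ w)
        = w' ⬝ᵥ (B *ᵥ w') + 2 * (u ⬝ᵥ (B *ᵥ w')) + u ⬝ᵥ (B *ᵥ u) := by
      rw [hw]
      simp only [mulVec_add, dotProduct_add, add_dotProduct]
      rw [symm_dot_swap hBsymm w' u]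
      ring
    -- quadratic form expansion
    have e3 : u ⬝ᵥ (A *ᵥ u) = q ⬝ᵥ q + lam * (u ⬝ᵥ (B *ᵥ u)) := by
      rw [hAdef, add_mulVec, dotProduct_add, dot_XtX, ← hq, smul_mulVec,
        dotProduct_smul, smul_eq_mul]
    -- stationarity in dot-product form
    have e4 : lam * (u ⬝ᵥ (B *ᵥ w')) = q ⬝ᵥ r := by
      have h5 : lam • (B *ᵥ w') = Xᵀ *ᵥ r := by
        have := hstat
        rw [hAdef, add_mulVec, smul_mulVec] at this
        have h6 : Xᵀ *ᵥ r = Xᵀ *ᵥ y - (Xᵀ * X) *ᵥ w' := by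
          rw [hr, mulVec_sub, mulVec_mulVec]
        rw [h6, ← this, add_sub_cancel_left]
      calc lam * (u ⬝ᵥ (B *ᵥ w')) = u ⬝ᵥ (lam • (B *ᵥ w')) := by
            rw [dotProduct_smul, smul_eq_mul]
      _ = u ⬝ᵥ (Xᵀ *ᵥ r) := by rw [h5]
      _ = q ⬝ᵥ r := by
            rw [dotProduct_mulVec, vecMul_transpose, ← hq]
    rw [hfval w, hfval w', e1, e2, e3]
    have : r ⬝ᵥ q = q ⬝ᵥ r := dotProduct_comm r q
    rw [this, ← e4]
    ring
  refine ⟨hw', fun w => ?_, fun w hfw => ?_⟩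
  · rw [key w]
    have h0 : 0 ≤ (w - w') ⬝ᵥ (A *ᵥ (w - w')) := by
      have := hA.posSemidef.dotProduct_mulVec_nonneg (w - w')
      simpa using this
    linarith
  · by_contra hne
    have hu0 : w - w' ≠ 0 := sub_ne_zero_of_ne hne
    have := hA.dotProduct_mulVec_pos hu0
    rw [star_trivial] at this
    have := key w
    rw [hfw] at this
    linarith
end
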